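/- arXiv:2604.12853 — 3 statements merged into one kernel-verified Lean document; each statement's English description precedes it below -/
import Mathlib

section
/- In the standing setup, suppose additionally that f is a strong lumping of P_X to P_Z. Then R is a row-stochastic matrix on Δ; consequently φ_m ≡ 1 for all m, φ ≡ 1, Δ' = Δ, and P = R. Moreover the projection proj²: Δ → B, (a,b) ↦ b, is a strong lumping of P to P_Y. -/
open MeasureTheory Filter Topology
open scoped ENNReal Classical

/-- A probability vector on a countable state space. -/
def IsProbVec {U : Type*} (v : U → ℝ≥0∞) : Prop := ∑' u, v u = 1

/-- A row-stochastic matrix on a countable state space. -/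
def IsStochastic {U : Type*} (P : U → U → ℝ≥0∞) : Prop := ∀ u, ∑' w, P u w = 1

/-- `μ` is the law of the time-homogeneous Markov chain `MC(v,P)`. -/
def IsMarkovChain {U : Type*} [MeasurableSpace U]
    (v : U → ℝ≥0∞) (P : U → U → ℝ≥0∞) (μ : Measure (ℕ → U)) : Prop :=
  IsProbabilityMeasure μ ∧ IsProbVec v ∧ IsStochastic P ∧
    ∀ (k : ℕ) (a : ℕ → U),
      μ {ω | ∀ i ≤ k, ω i = a i} = v (a 0) * ∏ i ∈ Finset.range k, P (a i) (a (i + 1))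

/-- `Δ(f,g) = {(a,b) : f a = g b}`. -/
abbrev Delta {A B C : Type*} (f : A → C) (g : B → C) :=
  {p : A × B // f p.1 = g p.2}

/-- The matrix `R` on `Δ(f,g)`:
`R((a,b),(a',b')) = P_X(a,a') * P_Y(b,b') / P_Z(f a, f a')` when `P_Z(f a, f a') > 0`,
else `0`. -/
noncomputable def Rmat {A B C : Type*} (PX : A → A → ℝ≥0∞) (PY : B → B → ℝ≥0∞)
    (PZ : C → C → ℝ≥0∞) (f : A → C) (g : B → C) (d e : Delta f g) : ℝ≥0∞ :=
  if PZ (f d.1.1) (f e.1.1) ≠ 0 then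
    PX d.1.1 e.1.1 * PY d.1.2 e.1.2 / PZ (f d.1.1) (f e.1.1)
  else 0

/-- `phim R m = R^m 1`, computed coordinatewise in `[0,∞]`. -/
noncomputable def phim {D : Type*} (R : D → D → ℝ≥0∞) : ℕ → D → ℝ≥0∞
  | 0 => fun _ => 1
  | m + 1 => fun d => ∑' e, R d e * phim R m e


open MeasureTheory Filter Topology
open scoped ENNReal Classical

private lemma key_zero {B C : Type*} [Countable B] [Countable C]
    [MeasurableSpace B] [MeasurableSingletonClass B]
    [MeasurableSpace C] [MeasurableSingletonClass C]
    {aY : B → ℝ≥0∞} {PY : B → B → ℝ≥0∞} {μY : Measure (ℕ → B)}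
    {aZ : C → ℝ≥0∞} {PZ : C → C → ℝ≥0∞} {μZ : Measure (ℕ → C)}
    {g : B → C}
    (hY : IsMarkovChain aY PY μY) (hZ : IsMarkovChain aZ PZ μZ)
    (hgY : μY.map (fun ω n => g (ω n)) = μZ)
    (hBvis : ∀ b : B, ∃ t : ℕ, μY {ω | ω t = b} ≠ 0)
    (b b' : B) (h0 : PZ (g b) (g b') = 0) : PY b b' = 0 := by
  by_contra hPY
  obtain ⟨t, ht⟩ := hBvis b
  have hcover : {ω : ℕ → B | ω t = b} ⊆
      ⋃ v : {v : Fin (t+1) → B // v (Fin.last t) = b},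
        {ω : ℕ → B | ∀ i : Fin (t+1), ω i = v.1 i} := by
    intro ω hω
    exact Set.mem_iUnion.2 ⟨⟨fun i => ω i, hω⟩, fun i => rfl⟩
  have hex : ∃ v : {v : Fin (t+1) → B // v (Fin.last t) = b},
      μY {ω : ℕ → B | ∀ i : Fin (t+1), ω i = v.1 i} ≠ 0 := by
    by_contra h
    push_neg at h
    exact ht (measure_mono_null hcover (measure_iUnion_null fun v => h v))
  obtain ⟨⟨v, hv⟩, hμv⟩ := hex
  set a : ℕ → B := fun i => if h : i < t + 1 then v ⟨i, h⟩ else b' with ha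
  have hset : {ω : ℕ → B | ∀ i : Fin (t+1), ω i = v i} = {ω | ∀ i ≤ t, ω i = a i} := by
    ext ω
    constructor
    · intro h i hi
      have hi' : i < t + 1 := Nat.lt_succ_of_le hi
      simpa [ha, hi', hi] using h ⟨i, hi'⟩
    · intro h i
      have hi : (i : ℕ) ≤ t := Nat.lt_succ_iff.mp i.2
      have := h i hi
      simpa [ha, i.2, hi] using this
  have hat : a t = b := by
    have : a t = v (Fin.last t) := by simp [ha]; rfl
    rw [this, hv]
  have hat1 : a (t+1) = b' := by simp [ha]
  have hcyl : μY {ω | ∀ i ≤ t, ω i = a i} ≠ 0 := by rw [← hset]; exact hμv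
  rw [hY.2.2.2 t a] at hcyl
  have hcyl1 : μY {ω | ∀ i ≤ t+1, ω i = a i} ≠ 0 := by
    rw [hY.2.2.2 (t+1) a, Finset.prod_range_succ, hat, hat1]
    rw [mul_ne_zero_iff] at hcyl
    exact mul_ne_zero hcyl.1 (mul_ne_zero hcyl.2 hPY)
  set c : ℕ → C := fun i => g (a i) with hc
  have hmeas : Measurable (fun (ω : ℕ → B) (n : ℕ) => g (ω n)) :=
    measurable_pi_lambda _ fun n => (measurable_of_countable g).comp (measurable_pi_apply n)
  have hTmeas : MeasurableSet {ω : ℕ → C | ∀ i ≤ t+1, ω i = c i} := by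
    have heq : {ω : ℕ → C | ∀ i ≤ t+1, ω i = c i}
        = ⋂ i ∈ Set.Iic (t+1), (fun ω : ℕ → C => ω i) ⁻¹' {c i} := by
      ext ω; simp [Set.mem_iInter, Set.mem_Iic]
    rw [heq]
    exact MeasurableSet.biInter (Set.to_countable _)
      fun i _ => (measurable_pi_apply i) (measurableSet_singleton _)
  have hZ0 : μZ {ω : ℕ → C | ∀ i ≤ t+1, ω i = c i} = 0 := by
    rw [hZ.2.2.2 (t+1) c]
    have h1 : PZ (c t) (c (t+1)) = 0 := by
      simp only [hc, hat, hat1]; exact h0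
    rw [Finset.prod_eq_zero (Finset.self_mem_range_succ t) h1, mul_zero]
  rw [← hgY, Measure.map_apply hmeas hTmeas] at hZ0
  have hsub : {ω : ℕ → B | ∀ i ≤ t+1, ω i = a i} ⊆
      (fun ω n => g (ω n)) ⁻¹' {ω : ℕ → C | ∀ i ≤ t+1, ω i = c i} := by
    intro ω hω i hi
    simp only [hc]
    rw [hω i hi]
  exact hcyl1 (measure_mono_null hsub hZ0)

private lemma rmat_inner_sum {A B C : Type*}
    {PX : A → A → ℝ≥0∞} {PY : B → B → ℝ≥0∞} {PZ : C → C → ℝ≥0∞}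
    {f : A → C} {g : B → C} {a : A} {b : B} (b' : B)
    (hd : f a = g b)
    (hPZfin : PZ (f a) (g b') ≠ ∞)
    (hDyn : ∑' a' : {x : A // f x = g b'}, PX a a'.1 = PZ (f a) (g b'))
    (hzero : PZ (f a) (g b') = 0 → PY b b' = 0) :
    ∑' a' : {x : A // f x = g b'},
      Rmat PX PY PZ f g ⟨(a, b), hd⟩ ⟨(a'.1, b'), a'.2⟩ = PY b b' := by
  by_cases h : PZ (f a) (g b') = 0
  · have hall : ∀ a' : {x : A // f x = g b'},
        Rmat PX PY PZ f g ⟨(a, b), hd⟩ ⟨(a'.1, b'), a'.2⟩ = 0 := by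
      intro a'
      simp [Rmat, a'.2, h]
    rw [tsum_congr hall, tsum_zero, hzero h]
  · have hall : ∀ a' : {x : A // f x = g b'},
        Rmat PX PY PZ f g ⟨(a, b), hd⟩ ⟨(a'.1, b'), a'.2⟩
          = PX a a'.1 * (PY b b' / PZ (f a) (g b')) := by
      intro a'
      simp [Rmat, a'.2, h, mul_div_assoc]
    rw [tsum_congr hall, ENNReal.tsum_mul_right, hDyn, ENNReal.mul_div_cancel h hPZfin]


private def deltaEquiv {A B C : Type*} (f : A → C) (g : B → C) :
    Delta f g ≃ Σ b' : B, {x : A // f x = g b'} :=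
  ⟨fun e => ⟨e.1.2, e.1.1, e.2⟩, fun s => ⟨(s.2.1, s.1), s.2.2⟩,
    fun e => rfl, fun s => rfl⟩

private def deltaFiberEquiv {A B C : Type*} (f : A → C) (g : B → C) (b' : B) :
    {e : Delta f g // e.1.2 = b'} ≃ {x : A // f x = g b'} :=
  ⟨fun e => ⟨e.1.1.1, e.1.2.trans (congrArg g e.2)⟩,
    fun a' => ⟨⟨(a'.1, b'), a'.2⟩, rfl⟩,
    fun e => by obtain ⟨⟨⟨x, y⟩, hxy⟩, rfl⟩ := e; rfl,
    fun a' => rfl⟩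

/-- **Strong lumping case (Proposition `g strong proj1 strong`).** If `f` is a strong lumping of
`P_X` to `P_Z` (Dynkin's criterion), then `R` is row-stochastic; consequently `φ_m ≡ 1` for all
`m`, `φ ≡ 1`, `Δ' = Δ`, and `P = R`. Moreover the projection `proj² : Δ → B` is a strong
lumping of `P` to `P_Y` (again via Dynkin's criterion). -/
theorem statement_5
    {A B C : Type*} [Countable A] [Countable B] [Countable C]
    [MeasurableSpace A] [MeasurableSingletonClass A]
    [MeasurableSpace B] [MeasurableSingletonClass B]
    [MeasurableSpace C] [MeasurableSingletonClass C]
    (αX : A → ℝ≥0∞) (PX : A → A → ℝ≥0∞) (μX : Measure (ℕ → A))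
    (αY : B → ℝ≥0∞) (PY : B → B → ℝ≥0∞) (μY : Measure (ℕ → B))
    (αZ : C → ℝ≥0∞) (PZ : C → C → ℝ≥0∞) (μZ : Measure (ℕ → C))
    (f : A → C) (g : B → C)
    (hX : IsMarkovChain αX PX μX) (hY : IsMarkovChain αY PY μY)
    (hZ : IsMarkovChain αZ PZ μZ)
    (hfX : μX.map (fun ω n => f (ω n)) = μZ)
    (hgY : μY.map (fun ω n => g (ω n)) = μZ)
    (hAvis : ∀ a : A, ∃ t : ℕ, μX {ω | ω t = a} ≠ 0)
    (hBvis : ∀ b : B, ∃ t : ℕ, μY {ω | ω t = b} ≠ 0)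
    (hDynkin : ∀ (a : A) (c' : C), ∑' a' : {x : A // f x = c'}, PX a a'.1 = PZ (f a) c')
    (φ : Delta f g → ℝ≥0∞)
    (hφ : ∀ d : Delta f g,
      Tendsto (fun m => phim (Rmat PX PY PZ f g) m d) atTop (𝓝 (φ d))) :
    (∀ d : Delta f g, ∑' e : Delta f g, Rmat PX PY PZ f g d e = 1) ∧
    (∀ (m : ℕ) (d : Delta f g), phim (Rmat PX PY PZ f g) m d = 1) ∧
    (∀ d : Delta f g, φ d = 1) ∧
    (∀ d : Delta f g, φ d ≠ 0) ∧
    (∀ d e : Delta f g, Rmat PX PY PZ f g d e * φ e / φ d = Rmat PX PY PZ f g d e) ∧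
    (∀ (d : Delta f g) (b' : B),
      ∑' e : {e : Delta f g // e.1.2 = b'},
        Rmat PX PY PZ f g d e.1 * φ e.1 / φ d = PY d.1.2 b') := by
  classical
  have hPZfin : ∀ c c' : C, PZ c c' ≠ ∞ := fun c c' =>
    ne_top_of_le_ne_top ENNReal.one_ne_top ((ENNReal.le_tsum c').trans_eq (hZ.2.2.1 c))
  have hzero : ∀ b b' : B, PZ (g b) (g b') = 0 → PY b b' = 0 :=
    key_zero hY hZ hgY hBvis
  -- row sums of R are 1
  have hrow : ∀ d : Delta f g, ∑' e : Delta f g, Rmat PX PY PZ f g d e = 1 := by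
    rintro ⟨⟨a, b⟩, hd⟩
    rw [← (deltaEquiv f g).symm.tsum_eq, ENNReal.tsum_sigma']
    have hinner : ∀ b' : B,
        (∑' a' : {x : A // f x = g b'},
          Rmat PX PY PZ f g ⟨(a, b), hd⟩ ((deltaEquiv f g).symm ⟨b', a'⟩)) = PY b b' := fun b' =>
      rmat_inner_sum b' hd (hPZfin _ _) (hDynkin a (g b')) (fun h => by
        have : f a = g b := hd
        rw [this] at h
        exact hzero b b' h)
    rw [tsum_congr hinner]
    exact hY.2.2.1 b
  have hphi : ∀ (m : ℕ) (d : Delta f g), phim (Rmat PX PY PZ f g) m d = 1 := by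
    intro m
    induction m with
    | zero => intro d; rfl
    | succ m ih =>
      intro d
      simp only [phim, ih, mul_one]
      exact hrow d
  have hφ1 : ∀ d : Delta f g, φ d = 1 := by
    intro d
    have h1 : Tendsto (fun m => phim (Rmat PX PY PZ f g) m d) atTop (𝓝 1) := by
      simp only [hphi]
      exact tendsto_const_nhds
    exact tendsto_nhds_unique (hφ d) h1
  refine ⟨hrow, hphi, hφ1, fun d => by rw [hφ1 d]; exact one_ne_zero, ?_, ?_⟩
  · intro d e
    rw [hφ1 d, hφ1 e, mul_one, div_one]
  · rintro ⟨⟨a, b⟩, hd⟩ b'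
    have hsimp : ∀ e : {e : Delta f g // e.1.2 = b'},
        Rmat PX PY PZ f g ⟨(a, b), hd⟩ e.1 * φ e.1 / φ ⟨(a, b), hd⟩
          = Rmat PX PY PZ f g ⟨(a, b), hd⟩ e.1 := by
      intro e
      rw [hφ1, hφ1, mul_one, div_one]
    rw [tsum_congr hsimp, ← (deltaFiberEquiv f g b').symm.tsum_eq]
    exact rmat_inner_sum b' hd (hPZfin _ _) (hDynkin a (g b')) (fun h => by
      have : f a = g b := hd
      rw [this] at h
      exact hzero b b' h)
end

section
/- In the standing setup, the vector α defined by α(a,b) = (α_X(a)·α_Y(b)/α_Z(c))·φ(a,b) for (a,b) ∈ Δ' with c = f(a) = g(b) and α_Z(c) > 0, and α(a,b) = 0 otherwise, is a probability distribution on Δ' whose marginals are the given initial distributions: Σ_{b: (a,b)∈Δ'} α(a,b) = α_X(a) for every a ∈ A and Σ_{a: (a,b)∈Δ'} α(a,b) = α_Y(b) for every b ∈ B. -/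
open MeasureTheory Filter Topology
open scoped ENNReal Classical

/-- The initial distribution `α` of the coupled chain on `Δ'`:
`α(a,b) = (α_X(a) * α_Y(b) / α_Z(c)) * φ(a,b)` when `α_Z(c) > 0`, and `0` otherwise. -/
noncomputable def alphaW {A B C : Type*} (αX : A → ℝ≥0∞) (αY : B → ℝ≥0∞) (αZ : C → ℝ≥0∞)
    (f : A → C) (g : B → C) (φ : Delta f g → ℝ≥0∞) (d : Delta f g) : ℝ≥0∞ :=
  if αZ (f d.1.1) ≠ 0 then αX d.1.1 * αY d.1.2 / αZ (f d.1.1) * φ d else 0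

/-! ### Auxiliary machinery -/

section Pad

variable {U : Type*}

/-- Pad a finite tuple to an infinite path by repeating irrelevantly. -/
def padF {k : ℕ} (t : Fin (k + 1) → U) : ℕ → U :=
  fun n => t ⟨min n k, Nat.lt_succ_of_le (min_le_right n k)⟩

lemma padF_le {k : ℕ} (t : Fin (k + 1) → U) {i : ℕ} (h : i ≤ k) :
    padF t i = t ⟨i, Nat.lt_succ_of_le h⟩ := by
  simp [padF, Nat.min_eq_left h]

lemma padF_fin {k : ℕ} (t : Fin (k + 1) → U) (i : Fin (k + 1)) :
    padF t i.1 = t i := by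
  rw [padF_le t (Nat.lt_succ_iff.mp i.2)]

lemma padF_cons_zero {k : ℕ} (b : U) (t : Fin (k + 1) → U) :
    padF (Fin.cons b t) 0 = b := by
  rw [padF_le _ (Nat.zero_le (k + 1))]
  exact Fin.cons_zero (α := fun _ : Fin (k + 2) => U) b t

lemma padF_cons_succ {k : ℕ} (b : U) (t : Fin (k + 1) → U) (n : ℕ) :
    padF (Fin.cons b t) (n + 1) = padF t n := by
  unfold padF
  have h2 := Fin.cons_succ (α := fun _ : Fin (k + 2) => U) b t
    ⟨min n k, Nat.lt_succ_of_le (min_le_right n k)⟩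
  rw [← h2]
  congr 1
  exact Fin.ext (by simp [Nat.succ_min_succ])

lemma padF_snoc {k : ℕ} (s : Fin (k + 1) → U) (u' : U) {i : ℕ} (h : i ≤ k) :
    padF (Fin.snoc s u') i = padF s i := by
  rw [padF_le _ (le_trans h (Nat.le_succ k)), padF_le _ h]
  have : (⟨i, Nat.lt_succ_of_le (le_trans h (Nat.le_succ k))⟩ : Fin (k + 2))
      = Fin.castSucc ⟨i, Nat.lt_succ_of_le h⟩ := rfl
  rw [this, Fin.snoc_castSucc]

lemma padF_snoc_last {k : ℕ} (s : Fin (k + 1) → U) (u' : U) :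
    padF (Fin.snoc s u') (k + 1) = u' := by
  rw [padF_le _ (le_refl (k+1))]
  have : (⟨k + 1, Nat.lt_succ_of_le (le_refl _)⟩ : Fin (k + 2)) = Fin.last (k + 1) := rfl
  rw [this, Fin.snoc_last]

end Pad

section TsumHelpers

lemma tsum_subtype_dite {α : Type*} (p : α → Prop) (F : ∀ a, p a → ℝ≥0∞) :
    ∑' x : {a // p a}, F x.1 x.2 = ∑' a, if h : p a then F a h else 0 := by
  have h1 : ∀ x : {a // p a}, F x.1 x.2 = (fun a => if h : p a then F a h else 0) x.1 :=
    fun x => (dif_pos x.2).symm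
  rw [tsum_congr h1]
  have hsupp : Function.support (fun a => if h : p a then F a h else 0) ⊆ {a | p a} := by
    intro a ha
    by_contra hp
    exact ha (dif_neg hp)
  exact tsum_subtype_eq_of_support_subset hsupp

lemma dite_tsum {ι : Type*} (p : Prop) (f : ι → p → ℝ≥0∞) :
    (if h : p then (∑' x, f x h) else 0) = ∑' x : ι, (if h : p then f x h else 0) := by
  split_ifs with h
  · rfl
  · simp

end TsumHelpers
section Chains

variable {U C : Type*} [Countable U] [MeasurableSpace U] [MeasurableSingletonClass U]

lemma meas_of_countable {V W : Type*} [Countable V] [MeasurableSpace V]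
    [MeasurableSingletonClass V] [MeasurableSpace W] (f : V → W) : Measurable f :=
  fun _ _ => (Set.to_countable _).measurableSet

/-- Decomposition of the measure of a prefix-determined event into tuple sums. -/
lemma chain_measure_eq {v : U → ℝ≥0∞} {P : U → U → ℝ≥0∞} {μ : Measure (ℕ → U)}
    (h : IsMarkovChain v P μ) (k : ℕ) (E : (ℕ → U) → Prop)
    (hE : ∀ ω ω' : ℕ → U, (∀ i ≤ k, ω i = ω' i) → E ω → E ω') :
    μ {ω | E ω} = ∑' t : Fin (k + 1) → U,
      if E (padF t) then v (padF t 0) * ∏ i ∈ Finset.range k, P (padF t i) (padF t (i + 1))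
      else 0 := by
  have hset : {ω | E ω} = ⋃ t : Fin (k + 1) → U,
      if E (padF t) then {ω | ∀ i ≤ k, ω i = padF t i} else (∅ : Set (ℕ → U)) := by
    ext ω
    simp only [Set.mem_setOf_eq, Set.mem_iUnion]
    constructor
    · intro hω
      refine ⟨fun i => ω i.1, ?_⟩
      have hag : ∀ i ≤ k, ω i = padF (fun i : Fin (k + 1) => ω i.1) i := by
        intro i hi
        rw [padF_le _ hi]
      have hpe : E (padF fun i : Fin (k + 1) => ω i.1) := hE ω _ hag hω
      rw [if_pos hpe]
      exact hag
    · rintro ⟨t, ht⟩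
      by_cases hc : E (padF t)
      · rw [if_pos hc] at ht
        exact hE (padF t) ω (fun i hi => (ht i hi).symm) hc
      · rw [if_neg hc] at ht
        exact absurd ht (Set.notMem_empty ω)
  rw [hset, measure_iUnion ?_ ?_]
  · refine tsum_congr fun t => ?_
    by_cases hc : E (padF t)
    · rw [if_pos hc, if_pos hc, h.2.2.2 k (padF t)]
    · simp [hc]
  · intro s t hst
    simp only [Function.onFun]
    by_cases h1 : E (padF s)
    · by_cases h2 : E (padF t)
      · rw [if_pos h1, if_pos h2, Set.disjoint_left]
        intro ω hω1 hω2
        apply hst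
        funext i
        have e1 : ω i.1 = padF s i.1 := hω1 i.1 (Nat.lt_succ_iff.mp i.2)
        have e2 : ω i.1 = padF t i.1 := hω2 i.1 (Nat.lt_succ_iff.mp i.2)
        rw [padF_fin] at e1 e2
        rw [← e1, e2]
      · rw [if_neg h2]
        exact Set.disjoint_empty _
    · rw [if_neg h1]
      exact Set.empty_disjoint _
  · intro t
    by_cases hc : E (padF t)
    · rw [if_pos hc]
      have : {ω : ℕ → U | ∀ i ≤ k, ω i = padF t i}
          = ⋂ i ∈ {i : ℕ | i ≤ k}, (fun ω : ℕ → U => ω i) ⁻¹' {padF t i} := by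
        ext ω; simp [Set.mem_iInter]
      rw [this]
      exact MeasurableSet.biInter (Set.to_countable _)
        (fun i _ => (measurable_pi_apply i) (measurableSet_singleton _))
    · rw [if_neg hc]
      exact MeasurableSet.empty

end Chains

section Walk

variable {B C : Type*}

/-- One step of the weighted forward evolution on the fibers of `g`. -/
noncomputable def stepW (PY : B → B → ℝ≥0∞) (g : B → C) (c' : C) (β : B → ℝ≥0∞) :
    B → ℝ≥0∞ :=
  fun b' => if g b' = c' then ∑' b, β b * PY b b' else 0

/-- Iterated forward evolution along a prescribed `C`-path. -/
noncomputable def iterW (PY : B → B → ℝ≥0∞) (g : B → C) : ℕ → (ℕ → C) → (B → ℝ≥0∞) → (B → ℝ≥0∞)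
  | 0, _, β => β
  | k + 1, w, β => iterW PY g k (fun n => w (n + 1)) (stepW PY g (w 1) β)

lemma stepW_supp (PY : B → B → ℝ≥0∞) (g : B → C) (c' : C) (β : B → ℝ≥0∞) (b' : B)
    (h : stepW PY g c' β b' ≠ 0) : g b' = c' := by
  by_contra hc
  exact h (if_neg hc)

lemma iterW_mass [Countable B] (PY : B → B → ℝ≥0∞) (g : B → C) :
    ∀ (k : ℕ) (w : ℕ → C) (β : B → ℝ≥0∞), (∀ b, β b ≠ 0 → g b = w 0) →
    ∑' b, iterW PY g k w β b = ∑' t : Fin (k + 1) → B,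
      if ∀ i ≤ k, g (padF t i) = w i then
        β (padF t 0) * ∏ i ∈ Finset.range k, PY (padF t i) (padF t (i + 1))
      else 0 := by
  intro k
  induction k with
  | zero =>
    intro w β hβ
    rw [← (Equiv.funUnique (Fin 1) B).symm.tsum_eq]
    show (∑' b, β b) = ∑' b : B, _
    refine tsum_congr fun b => ?_
    have hpad : ∀ i : ℕ, padF ((Equiv.funUnique (Fin 1) B).symm b) i = b := fun i => rfl
    by_cases hc : g b = w 0
    · rw [if_pos]
      · simp only [Finset.prod_range_zero, mul_one]
        rfl
      · intro i hi
        interval_cases i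
        rw [hpad]; exact hc
    · rw [if_neg]
      · by_contra hb
        exact hc (hβ b (by simpa using hb))
      · intro hall
        exact hc (by have := hall 0 (Nat.zero_le 0); rw [hpad] at this; exact this)
  | succ k ih =>
    intro w β hβ
    show (∑' b, iterW PY g k (fun n => w (n + 1)) (stepW PY g (w 1) β) b) = _
    rw [ih (fun n => w (n + 1)) (stepW PY g (w 1) β) (fun b hb => stepW_supp _ _ _ _ _ hb)]
    rw [← (Fin.consEquiv (fun _ : Fin (k + 2) => B)).tsum_eq]
    rw [ENNReal.tsum_prod']
    rw [ENNReal.tsum_comm]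
    refine tsum_congr fun t' => ?_
    -- now sum over the first coordinate b
    by_cases hc : ∀ i ≤ k, g (padF t' i) = w (i + 1)
    · rw [if_pos hc]
      have hstep : stepW PY g (w 1) β (padF t' 0) = ∑' b, β b * PY b (padF t' 0) := by
        rw [stepW, if_pos (by simpa using hc 0 (Nat.zero_le k))]
      rw [hstep, ← ENNReal.tsum_mul_right]
      refine tsum_congr fun b => ?_
      have hcons : ∀ n : ℕ, padF (Fin.consEquiv (fun _ : Fin (k + 2) => B) (b, t')) (n + 1)
          = padF t' n := by
        intro n
        exact padF_cons_succ b t' n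
      have hcons0 : padF (Fin.consEquiv (fun _ : Fin (k + 2) => B) (b, t')) 0 = b :=
        padF_cons_zero b t'
      by_cases hgb : g b = w 0
      · rw [if_pos]
        · rw [hcons0, Finset.prod_range_succ']
          simp only [hcons, hcons0]
          ring
        · intro i hi
          cases i with
          | zero => rw [hcons0]; exact hgb
          | succ n => rw [hcons n]; exact hc n (Nat.succ_le_succ_iff.mp hi)
      · have hb0 : β b = 0 := by
          by_contra hb
          exact hgb (hβ b hb)
        rw [hb0, if_neg]
        · simp
        · intro hall
          exact hgb (by rw [← hcons0]; exact hall 0 (Nat.zero_le _))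
    · rw [if_neg hc]
      symm
      rw [ENNReal.tsum_eq_zero]
      intro b
      rw [if_neg]
      intro hall
      apply hc
      intro i hi
      rw [← padF_cons_succ b t' i]
      exact hall (i + 1) (Nat.succ_le_succ hi)
  
end Walk
section Lumped

variable {B C : Type*} [Countable B] [Countable C]
  [MeasurableSpace B] [MeasurableSingletonClass B]
  [MeasurableSpace C] [MeasurableSingletonClass C]

/-- The total mass of the forward evolution started from the lumped initial distribution
equals the `Z`-cylinder probability. -/
lemma lumped_measure {αY : B → ℝ≥0∞} {PY : B → B → ℝ≥0∞} {μY : Measure (ℕ → B)}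
    {αZ : C → ℝ≥0∞} {PZ : C → C → ℝ≥0∞} {μZ : Measure (ℕ → C)}
    (hY : IsMarkovChain αY PY μY) (hZ : IsMarkovChain αZ PZ μZ) (g : B → C)
    (hg : μY.map (fun ω n => g (ω n)) = μZ) (k : ℕ) (w : ℕ → C) :
    ∑' b, iterW PY g k w (fun b => if g b = w 0 then αY b else 0) b
      = αZ (w 0) * ∏ i ∈ Finset.range k, PZ (w i) (w (i + 1)) := by
  have hsupp : ∀ b, (if g b = w 0 then αY b else 0) ≠ 0 → g b = w 0 := by
    intro b hb
    by_contra hc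
    exact hb (if_neg hc)
  rw [iterW_mass PY g k w _ hsupp]
  have hEq : μY {ω | ∀ i ≤ k, g (ω i) = w i} = μZ {ω | ∀ i ≤ k, ω i = w i} := by
    rw [← hg]
    rw [Measure.map_apply]
    · rfl
    · exact measurable_pi_lambda _ fun n =>
        (meas_of_countable g).comp (measurable_pi_apply n)
    · have : {ω : ℕ → C | ∀ i ≤ k, ω i = w i}
          = ⋂ i ∈ {i : ℕ | i ≤ k}, (fun ω : ℕ → C => ω i) ⁻¹' {w i} := by
        ext ω; simp [Set.mem_iInter]
      rw [this]
      exact MeasurableSet.biInter (Set.to_countable _)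
        (fun i _ => (measurable_pi_apply i) (measurableSet_singleton _))
  have hcylY := chain_measure_eq hY k (fun ω => ∀ i ≤ k, g (ω i) = w i)
    (by
      intro ω ω' hag hω i hi
      rw [← hag i hi]
      exact hω i hi)
  rw [hcylY, hZ.2.2.2 k w] at hEq
  rw [← hEq]
  refine tsum_congr fun t => ?_
  by_cases hc : ∀ i ≤ k, g (padF t i) = w i
  · rw [if_pos hc, if_pos hc, if_pos (hc 0 (Nat.zero_le k))]
  · rw [if_neg hc, if_neg hc]

lemma init_mass {αY : B → ℝ≥0∞} {PY : B → B → ℝ≥0∞} {μY : Measure (ℕ → B)}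
    {αZ : C → ℝ≥0∞} {PZ : C → C → ℝ≥0∞} {μZ : Measure (ℕ → C)}
    (hY : IsMarkovChain αY PY μY) (hZ : IsMarkovChain αZ PZ μZ) (g : B → C)
    (hg : μY.map (fun ω n => g (ω n)) = μZ) (c : C) :
    ∑' b, (if g b = c then αY b else 0) = αZ c := by
  have := lumped_measure hY hZ g hg 0 (fun _ => c)
  simpa [iterW] using this

end Lumped

section GoodWSec

variable {B C : Type*}

/-- The weight `β` behaves like a sub-distribution on the fiber of `c` whose lumped
forward evolution follows `PZ`. -/
def GoodW (PY : B → B → ℝ≥0∞) (g : B → C) (PZ : C → C → ℝ≥0∞) (c : C) (β : B → ℝ≥0∞) : Prop :=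
  ∀ (k : ℕ) (w : ℕ → C), w 0 = c →
    ∑' b, iterW PY g k w β b = (∑' b, β b) * ∏ i ∈ Finset.range k, PZ (w i) (w (i + 1))

lemma goodW_init [Countable B] [Countable C]
    [MeasurableSpace B] [MeasurableSingletonClass B]
    [MeasurableSpace C] [MeasurableSingletonClass C] {αY : B → ℝ≥0∞} {PY : B → B → ℝ≥0∞} {μY : Measure (ℕ → B)}
    {αZ : C → ℝ≥0∞} {PZ : C → C → ℝ≥0∞} {μZ : Measure (ℕ → C)}
    (hY : IsMarkovChain αY PY μY) (hZ : IsMarkovChain αZ PZ μZ) (g : B → C)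
    (hg : μY.map (fun ω n => g (ω n)) = μZ) (c : C) :
    GoodW PY g PZ c (fun b => if g b = c then αY b else 0) := by
  intro k w hw
  subst hw
  rw [lumped_measure hY hZ g hg k w, init_mass hY hZ g hg (w 0)]

lemma stepW_mass {PY : B → B → ℝ≥0∞} {g : B → C} {PZ : C → C → ℝ≥0∞} {c : C} {β : B → ℝ≥0∞}
    (h : GoodW PY g PZ c β) (c' : C) :
    ∑' b, stepW PY g c' β b = (∑' b, β b) * PZ c c' := by
  have h1 := h 1 (fun n => if n = 0 then c else c') (by simp)
  simpa [iterW] using h1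

lemma goodW_step {PY : B → B → ℝ≥0∞} {g : B → C} {PZ : C → C → ℝ≥0∞} {c : C} {β : B → ℝ≥0∞}
    (h : GoodW PY g PZ c β) (c' : C) : GoodW PY g PZ c' (stepW PY g c' β) := by
  intro k w hw
  set v : ℕ → C := fun n => Nat.rec c (fun m _ => w m) n with hv
  have hv0 : v 0 = c := rfl
  have hvsucc : ∀ n, v (n + 1) = w n := fun n => rfl
  have h1 := h (k + 1) v hv0
  have hiter : iterW PY g (k + 1) v β = iterW PY g k w (stepW PY g c' β) := by
    show iterW PY g k (fun n => v (n + 1)) (stepW PY g (v 1) β) = _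
    have : (fun n => v (n + 1)) = w := funext fun n => hvsucc n
    rw [this]
    have hv1 : v 1 = c' := by rw [show v 1 = w 0 from rfl, hw]
    rw [hv1]
  rw [hiter] at h1
  rw [h1, stepW_mass h c']
  rw [Finset.prod_range_succ']
  have hterm : ∀ i, PZ (v (i + 1)) (v (i + 1 + 1)) = PZ (w i) (w (i + 1)) := fun i => rfl
  have h0 : PZ (v 0) (v (0 + 1)) = PZ c c' := by
    rw [hv0, show v (0 + 1) = w 0 from rfl, hw]
  simp only [hterm, h0]
  ring

end GoodWSec

section PosStep

/-- One-step supports are compatible with the lumped chain. -/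
lemma pos_step {U C : Type*} [Countable U] [Countable C]
    [MeasurableSpace U] [MeasurableSingletonClass U]
    [MeasurableSpace C] [MeasurableSingletonClass C]
    {v : U → ℝ≥0∞} {P : U → U → ℝ≥0∞} {μ : Measure (ℕ → U)}
    {αZ : C → ℝ≥0∞} {PZ : C → C → ℝ≥0∞} {μZ : Measure (ℕ → C)}
    (hU : IsMarkovChain v P μ) (hZ : IsMarkovChain αZ PZ μZ)
    (f : U → C) (hf : μ.map (fun ω n => f (ω n)) = μZ)
    (hvis : ∀ u : U, ∃ t : ℕ, μ {ω | ω t = u} ≠ 0) (u u' : U) (hP : P u u' ≠ 0) :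
    PZ (f u) (f u') ≠ 0 := by
  obtain ⟨t, ht⟩ := hvis u
  intro hPZ
  rw [chain_measure_eq hU t (fun ω => ω t = u)
    (fun ω ω' ha h => by show ω' t = u; rw [← ha t le_rfl]; exact h)] at ht
  obtain ⟨s, hs⟩ : ∃ s : Fin (t + 1) → U, (if padF s t = u then
      v (padF s 0) * ∏ i ∈ Finset.range t, P (padF s i) (padF s (i + 1)) else 0) ≠ 0 := by
    by_contra hcon
    push_neg at hcon
    exact ht (ENNReal.tsum_eq_zero.mpr (fun s => hcon s))
  have hsu : padF s t = u := by
    by_contra hne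
    exact hs (if_neg hne)
  rw [if_pos hsu] at hs
  -- the two-coordinate event has positive μ-measure
  have h2 : μ {ω | ω t = u ∧ ω (t + 1) = u'} ≠ 0 := by
    rw [chain_measure_eq hU (t + 1) (fun ω => ω t = u ∧ ω (t + 1) = u')
      (fun ω ω' ha h => ⟨by show ω' t = u; rw [← ha t (Nat.le_succ t)]; exact h.1,
        by show ω' (t + 1) = u'; rw [← ha (t + 1) le_rfl]; exact h.2⟩)]
    intro h0
    have hterm := ENNReal.tsum_eq_zero.mp h0 (Fin.snoc s u')
    have hc1 : padF (Fin.snoc s u') t = u := by rw [padF_snoc s u' le_rfl, hsu]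
    have hc2 : padF (Fin.snoc s u') (t + 1) = u' := padF_snoc_last s u'
    rw [if_pos ⟨hc1, hc2⟩] at hterm
    rw [Finset.prod_range_succ] at hterm
    have hpads : ∀ i : ℕ, i ≤ t → padF (Fin.snoc s u') i = padF s i := fun i hi => padF_snoc s u' hi
    rw [hpads 0 (Nat.zero_le t)] at hterm
    have hprod : ∏ i ∈ Finset.range t, P (padF (Fin.snoc s u') i) (padF (Fin.snoc s u') (i + 1))
        = ∏ i ∈ Finset.range t, P (padF s i) (padF s (i + 1)) := by
      refine Finset.prod_congr rfl fun i hi => ?_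
      have hit := Finset.mem_range.mp hi
      rw [hpads i (le_of_lt hit), hpads (i + 1) hit]
    rw [hprod, hc1, hc2] at hterm
    rw [← mul_assoc] at hterm
    rcases mul_eq_zero.mp hterm with h | h
    · exact hs h
    · exact hP h
  -- push forward to Z
  have h3 : μZ {ω | ω t = f u ∧ ω (t + 1) = f u'} ≠ 0 := by
    rw [← hf, Measure.map_apply]
    · intro h0
      apply h2
      refine measure_mono_null ?_ h0
      intro ω hω
      exact ⟨by simp [hω.1], by simp [hω.2]⟩
    · exact measurable_pi_lambda _ fun n =>
        (meas_of_countable f).comp (measurable_pi_apply n)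
    · have : {ω : ℕ → C | ω t = f u ∧ ω (t + 1) = f u'}
          = ((fun ω : ℕ → C => ω t) ⁻¹' {f u}) ∩ ((fun ω : ℕ → C => ω (t + 1)) ⁻¹' {f u'}) := by
        ext ω; simp [Set.mem_setOf_eq]
      rw [this]
      exact ((measurable_pi_apply t) (measurableSet_singleton _)).inter
        ((measurable_pi_apply (t + 1)) (measurableSet_singleton _))
  apply h3
  rw [chain_measure_eq hZ (t + 1) (fun ω => ω t = f u ∧ ω (t + 1) = f u')
    (fun ω ω' ha h => ⟨by show ω' t = f u; rw [← ha t (Nat.le_succ t)]; exact h.1,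
      by show ω' (t + 1) = f u'; rw [← ha (t + 1) le_rfl]; exact h.2⟩)]
  refine ENNReal.tsum_eq_zero.mpr fun s' => ?_
  by_cases hcond : padF s' t = f u ∧ padF s' (t + 1) = f u'
  · rw [if_pos hcond]
    apply mul_eq_zero_of_right
    refine Finset.prod_eq_zero (Finset.self_mem_range_succ t) ?_
    rw [hcond.1, hcond.2, hPZ]
  · rw [if_neg hcond]

end PosStep
section DeltaEquiv

variable {A B C : Type*}

def deltaSigmaFst (f : A → C) (g : B → C) :
    (Σ a : A, {b : B // f a = g b}) ≃ Delta f g where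
  toFun x := ⟨(x.1, x.2.1), x.2.2⟩
  invFun d := ⟨d.1.1, d.1.2, d.2⟩
  left_inv := by rintro ⟨a, b, h⟩; rfl
  right_inv := by rintro ⟨⟨a, b⟩, h⟩; rfl

def deltaSigmaSnd (f : A → C) (g : B → C) :
    (Σ b : B, {a : A // f a = g b}) ≃ Delta f g where
  toFun x := ⟨(x.2.1, x.1), x.2.2⟩
  invFun d := ⟨d.1.2, d.1.1, d.2⟩
  left_inv := by rintro ⟨b, a, h⟩; rfl
  right_inv := by rintro ⟨⟨a, b⟩, h⟩; rfl

lemma tsum_delta_fst (f : A → C) (g : B → C) (F : Delta f g → ℝ≥0∞) :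
    ∑' d, F d = ∑' (a : A) (b : {b : B // f a = g b}), F ⟨(a, b.1), b.2⟩ := by
  rw [← (deltaSigmaFst f g).tsum_eq F, ENNReal.tsum_sigma']
  rfl

lemma tsum_delta_snd (f : A → C) (g : B → C) (F : Delta f g → ℝ≥0∞) :
    ∑' d, F d = ∑' (b : B) (a : {a : A // f a = g b}), F ⟨(a.1, b), a.2⟩ := by
  rw [← (deltaSigmaSnd f g).tsum_eq F, ENNReal.tsum_sigma']
  rfl

def swapE (f : A → C) (g : B → C) : Delta f g ≃ Delta g f where
  toFun d := ⟨(d.1.2, d.1.1), d.2.symm⟩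
  invFun d := ⟨(d.1.2, d.1.1), d.2.symm⟩
  left_inv := by rintro ⟨⟨a, b⟩, h⟩; rfl
  right_inv := by rintro ⟨⟨b, a⟩, h⟩; rfl

lemma Rmat_swap (PX : A → A → ℝ≥0∞) (PY : B → B → ℝ≥0∞) (PZ : C → C → ℝ≥0∞)
    (f : A → C) (g : B → C) (d e : Delta f g) :
    Rmat PY PX PZ g f (swapE f g d) (swapE f g e) = Rmat PX PY PZ f g d e := by
  show (if PZ (g d.1.2) (g e.1.2) ≠ 0 then PY d.1.2 e.1.2 * PX d.1.1 e.1.1 / PZ (g d.1.2) (g e.1.2)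
      else 0) = _
  rw [← d.2, ← e.2, mul_comm (PY d.1.2 e.1.2) (PX d.1.1 e.1.1)]
  rfl

lemma phim_swap (PX : A → A → ℝ≥0∞) (PY : B → B → ℝ≥0∞) (PZ : C → C → ℝ≥0∞)
    (f : A → C) (g : B → C) :
    ∀ (m : ℕ) (d : Delta f g),
      phim (Rmat PY PX PZ g f) m (swapE f g d) = phim (Rmat PX PY PZ f g) m d := by
  intro m
  induction m with
  | zero => intro d; rfl
  | succ m ih =>
    intro d
    show (∑' e' : Delta g f, Rmat PY PX PZ g f (swapE f g d) e' * phim (Rmat PY PX PZ g f) m e')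
      = ∑' e : Delta f g, Rmat PX PY PZ f g d e * phim (Rmat PX PY PZ f g) m e
    rw [← (swapE f g).tsum_eq
      (fun e' => Rmat PY PX PZ g f (swapE f g d) e' * phim (Rmat PY PX PZ g f) m e')]
    exact tsum_congr fun e => by rw [Rmat_swap, ih]

end DeltaEquiv

section KeyL

variable {A B C : Type*}

lemma keyL [Countable A] [Countable B]
    (PX : A → A → ℝ≥0∞) (PY : B → B → ℝ≥0∞) (PZ : C → C → ℝ≥0∞) (f : A → C) (g : B → C)
    (hPX : IsStochastic PX) (hPZfin : ∀ c c', PZ c c' ≠ ⊤)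
    (hPXPZ : ∀ a a', PX a a' ≠ 0 → PZ (f a) (f a') ≠ 0) :
    ∀ (m : ℕ) (a : A) (β : B → ℝ≥0∞), GoodW PY g PZ (f a) β →
      (∀ b, β b ≠ 0 → g b = f a) → (∑' b, β b) ≠ ⊤ →
      ∑' b : B, (if h : f a = g b then β b * phim (Rmat PX PY PZ f g) m ⟨(a, b), h⟩ else 0)
        = ∑' b, β b := by
  intro m
  induction m with
  | zero =>
    intro a β hG hS hfin
    refine tsum_congr fun b => ?_
    by_cases h : f a = g b
    · rw [dif_pos h]
      show β b * 1 = β b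
      rw [mul_one]
    · rw [dif_neg h]
      by_contra hne
      exact h ((hS b fun h0 => hne h0.symm).symm)
  | succ m ih =>
    intro a β hG hS hfin
    have hphi : ∀ (b : B) (h : f a = g b),
        phim (Rmat PX PY PZ f g) (m + 1) ⟨(a, b), h⟩
          = ∑' (a' : A) (b' : {b' : B // f a' = g b'}),
              Rmat PX PY PZ f g ⟨(a, b), h⟩ ⟨(a', b'.1), b'.2⟩
                * phim (Rmat PX PY PZ f g) m ⟨(a', b'.1), b'.2⟩ := by
      intro b h
      show (∑' e : Delta f g, _) = _
      rw [tsum_delta_fst f g]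
    -- massage the left-hand side into a triple sum
    have step1 : ∑' b : B,
        (if h : f a = g b then β b * phim (Rmat PX PY PZ f g) (m + 1) ⟨(a, b), h⟩ else 0)
        = ∑' (b : B) (a' : A) (b' : {b' : B // f a' = g b'}),
            (if h : f a = g b then
              β b * (Rmat PX PY PZ f g ⟨(a, b), h⟩ ⟨(a', b'.1), b'.2⟩
                * phim (Rmat PX PY PZ f g) m ⟨(a', b'.1), b'.2⟩) else 0) := by
      refine tsum_congr fun b => ?_
      by_cases h : f a = g b
      · rw [dif_pos h, hphi b h, ← ENNReal.tsum_mul_left]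
        refine tsum_congr fun a' => ?_
        rw [← ENNReal.tsum_mul_left]
        refine tsum_congr fun b' => ?_
        rw [dif_pos h]
      · rw [dif_neg h]
        symm
        rw [ENNReal.tsum_eq_zero]
        intro a'
        rw [ENNReal.tsum_eq_zero]
        intro b'
        rw [dif_neg h]
    rw [step1, ENNReal.tsum_comm]
    have step2 : ∀ a' : A,
        (∑' (b : B) (b' : {b' : B // f a' = g b'}),
          (if h : f a = g b then
            β b * (Rmat PX PY PZ f g ⟨(a, b), h⟩ ⟨(a', b'.1), b'.2⟩
              * phim (Rmat PX PY PZ f g) m ⟨(a', b'.1), b'.2⟩) else 0))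
        = PX a a' * ∑' b, β b := by
      intro a'
      rw [ENNReal.tsum_comm]
      by_cases hz : PZ (f a) (f a') ≠ 0
      · have hR : ∀ (b : B) (h : f a = g b) (b' : {b' : B // f a' = g b'}),
            Rmat PX PY PZ f g ⟨(a, b), h⟩ ⟨(a', b'.1), b'.2⟩
              = PX a a' * PY b b'.1 / PZ (f a) (f a') := by
          intro b h b'
          rw [Rmat, if_pos hz]
        have inner : ∀ b' : {b' : B // f a' = g b'},
            (∑' b : B, (if h : f a = g b then
              β b * (Rmat PX PY PZ f g ⟨(a, b), h⟩ ⟨(a', b'.1), b'.2⟩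
                * phim (Rmat PX PY PZ f g) m ⟨(a', b'.1), b'.2⟩) else 0))
            = stepW PY g (f a') β b'.1
                * (PX a a' / PZ (f a) (f a') * phim (Rmat PX PY PZ f g) m ⟨(a', b'.1), b'.2⟩) := by
          intro b'
          have hsw : stepW PY g (f a') β b'.1 = ∑' b, β b * PY b b'.1 := by
            rw [stepW, if_pos b'.2.symm]
          rw [hsw, ← ENNReal.tsum_mul_right]
          refine tsum_congr fun b => ?_
          by_cases h : f a = g b
          · rw [dif_pos h, hR b h b']
            rw [ENNReal.div_eq_inv_mul, ENNReal.div_eq_inv_mul]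
            ring
          · rw [dif_neg h]
            have hb0 : β b = 0 := by
              by_contra hb
              exact h ((hS b hb).symm)
            rw [hb0]
            simp
        rw [tsum_congr inner]
        have pull : (∑' b' : {b' : B // f a' = g b'}, stepW PY g (f a') β b'.1
            * (PX a a' / PZ (f a) (f a') * phim (Rmat PX PY PZ f g) m ⟨(a', b'.1), b'.2⟩))
            = PX a a' / PZ (f a) (f a')
              * ∑' b' : {b' : B // f a' = g b'}, stepW PY g (f a') β b'.1
                  * phim (Rmat PX PY PZ f g) m ⟨(a', b'.1), b'.2⟩ := by
          rw [← ENNReal.tsum_mul_left]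
          refine tsum_congr fun b' => ?_
          ring
        rw [pull]
        have hGood' : GoodW PY g PZ (f a') (stepW PY g (f a') β) := goodW_step hG (f a')
        have hS' : ∀ b', stepW PY g (f a') β b' ≠ 0 → g b' = f a' := stepW_supp PY g (f a') β
        have hfin' : (∑' b', stepW PY g (f a') β b') ≠ ⊤ := by
          rw [stepW_mass hG (f a')]
          exact ENNReal.mul_ne_top hfin (hPZfin (f a) (f a'))
        have hsub : (∑' b' : {b' : B // f a' = g b'}, stepW PY g (f a') β b'.1
            * phim (Rmat PX PY PZ f g) m ⟨(a', b'.1), b'.2⟩)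
            = ∑' b' : B, (if h : f a' = g b' then
                stepW PY g (f a') β b' * phim (Rmat PX PY PZ f g) m ⟨(a', b'), h⟩ else 0) :=
          tsum_subtype_dite (fun b' => f a' = g b')
            (fun b' h => stepW PY g (f a') β b' * phim (Rmat PX PY PZ f g) m ⟨(a', b'), h⟩)
        rw [hsub, ih a' (stepW PY g (f a') β) hGood' hS' hfin', stepW_mass hG (f a')]
        rw [ENNReal.div_eq_inv_mul]
        calc (PZ (f a) (f a'))⁻¹ * PX a a' * ((∑' b, β b) * PZ (f a) (f a'))
            = PX a a' * (∑' b, β b) * ((PZ (f a) (f a'))⁻¹ * PZ (f a) (f a')) := by ring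
          _ = PX a a' * ∑' b, β b := by
              rw [ENNReal.inv_mul_cancel hz (hPZfin (f a) (f a')), mul_one]
      · push_neg at hz
        have hPX0 : PX a a' = 0 := by
          by_contra hp
          exact (hPXPZ a a' hp) hz
        rw [hPX0, zero_mul]
        rw [ENNReal.tsum_eq_zero]
        intro b'
        rw [ENNReal.tsum_eq_zero]
        intro b
        by_cases h : f a = g b
        · rw [dif_pos h]
          have : Rmat PX PY PZ f g ⟨(a, b), h⟩ ⟨(a', b'.1), b'.2⟩ = 0 := by
            rw [Rmat, if_neg (by simpa using hz)]
          rw [this]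
          simp
        · rw [dif_neg h]
    rw [tsum_congr step2, ENNReal.tsum_mul_right, hPX a, one_mul]

end KeyL
section LimitHelpers

lemma tsum_le_of_tendsto {ι : Type*} {F : ℕ → ι → ℝ≥0∞} {G : ι → ℝ≥0∞} {c : ℝ≥0∞}
    (h : ∀ i, Tendsto (fun m => F m i) atTop (𝓝 (G i))) (hb : ∀ m, (∑' i, F m i) ≤ c) :
    (∑' i, G i) ≤ c := by
  rw [ENNReal.tsum_eq_iSup_sum]
  refine iSup_le fun s => ?_
  have hs : Tendsto (fun m => ∑ i ∈ s, F m i) atTop (𝓝 (∑ i ∈ s, G i)) :=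
    tendsto_finset_sum s fun i _ => h i
  exact le_of_tendsto hs (Eventually.of_forall fun m =>
    le_trans (ENNReal.sum_le_tsum s) (hb m))

lemma tsum_pinch {ι : Type*} {u v : ι → ℝ≥0∞} (hle : ∀ i, u i ≤ v i)
    (hge : (∑' i, v i) ≤ ∑' i, u i) (hfin : (∑' i, v i) ≠ ⊤) (i0 : ι) : u i0 = v i0 := by
  refine le_antisymm (hle i0) ?_
  by_contra hlt
  push_neg at hlt
  have hrest : (∑' i, if i = i0 then 0 else u i) ≤ ∑' i, if i = i0 then 0 else v i := by
    refine Summable.tsum_le_tsum (fun i => ?_) ENNReal.summable ENNReal.summable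
    by_cases h : i = i0
    · simp [h]
    · simpa [h] using hle i
  have hrfin : (∑' i, if i = i0 then 0 else v i) ≠ ⊤ := by
    intro htop
    apply hfin
    rw [ENNReal.tsum_eq_add_tsum_ite i0, htop, add_top]
  have hchain : v i0 + (∑' i, if i = i0 then 0 else v i)
      ≤ u i0 + (∑' i, if i = i0 then 0 else v i) := by
    calc v i0 + (∑' i, if i = i0 then 0 else v i) = ∑' i, v i :=
          (ENNReal.tsum_eq_add_tsum_ite i0).symm
      _ ≤ ∑' i, u i := hge
      _ = u i0 + (∑' i, if i = i0 then 0 else u i) := ENNReal.tsum_eq_add_tsum_ite i0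
      _ ≤ u i0 + (∑' i, if i = i0 then 0 else v i) := add_le_add_right hrest _
  have := (ENNReal.add_le_add_iff_right hrfin).mp hchain
  exact absurd this (not_le.mpr hlt)

end LimitHelpers

section FibEquivs

variable {A B C : Type*}

def fibEquivA (f : A → C) (g : B → C) (a : A) :
    {b : B // f a = g b} ≃ {d : Delta f g // d.1.1 = a} where
  toFun b' := ⟨⟨(a, b'.1), b'.2⟩, rfl⟩
  invFun d := ⟨d.1.1.2, by
    have h1 := d.1.2
    have h2 := d.2
    rw [h2] at h1
    exact h1⟩
  left_inv := by rintro ⟨b, h⟩; rfl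
  right_inv := by rintro ⟨⟨⟨a', b⟩, h⟩, rfl⟩; rfl

def fibEquivB (f : A → C) (g : B → C) (b : B) :
    {a : A // f a = g b} ≃ {d : Delta f g // d.1.2 = b} where
  toFun a' := ⟨⟨(a'.1, b), a'.2⟩, rfl⟩
  invFun d := ⟨d.1.1.1, by
    have h1 := d.1.2
    have h2 := d.2
    rw [h2] at h1
    exact h1⟩
  left_inv := by rintro ⟨a, h⟩; rfl
  right_inv := by rintro ⟨⟨⟨a, b'⟩, h⟩, rfl⟩; rfl

end FibEquivs
/-- **`α` is a coupling of `α_X` and `α_Y`.** The vector `α` is a probability distribution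
(supported on `Δ'`) whose marginals are the given initial distributions:
`Σ_{b : (a,b) ∈ Δ'} α(a,b) = α_X(a)` for every `a ∈ A` and
`Σ_{a : (a,b) ∈ Δ'} α(a,b) = α_Y(b)` for every `b ∈ B`. -/
theorem statement_11
    {A B C : Type*} [Countable A] [Countable B] [Countable C]
    [MeasurableSpace A] [MeasurableSingletonClass A]
    [MeasurableSpace B] [MeasurableSingletonClass B]
    [MeasurableSpace C] [MeasurableSingletonClass C]
    (αX : A → ℝ≥0∞) (PX : A → A → ℝ≥0∞) (μX : Measure (ℕ → A))
    (αY : B → ℝ≥0∞) (PY : B → B → ℝ≥0∞) (μY : Measure (ℕ → B))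
    (αZ : C → ℝ≥0∞) (PZ : C → C → ℝ≥0∞) (μZ : Measure (ℕ → C))
    (f : A → C) (g : B → C)
    (hX : IsMarkovChain αX PX μX) (hY : IsMarkovChain αY PY μY)
    (hZ : IsMarkovChain αZ PZ μZ)
    (hfX : μX.map (fun ω n => f (ω n)) = μZ)
    (hgY : μY.map (fun ω n => g (ω n)) = μZ)
    (hAvis : ∀ a : A, ∃ t : ℕ, μX {ω | ω t = a} ≠ 0)
    (hBvis : ∀ b : B, ∃ t : ℕ, μY {ω | ω t = b} ≠ 0)
    (φ : Delta f g → ℝ≥0∞)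
    (hφ : ∀ d : Delta f g,
      Tendsto (fun m => phim (Rmat PX PY PZ f g) m d) atTop (𝓝 (φ d)))
    (hφfin : ∀ d : Delta f g, φ d ≠ ⊤) :
    (∑' d : Delta f g, alphaW αX αY αZ f g φ d = 1) ∧
    (∀ a : A, ∑' d : {d : Delta f g // d.1.1 = a}, alphaW αX αY αZ f g φ d.1 = αX a) ∧
    (∀ b : B, ∑' d : {d : Delta f g // d.1.2 = b}, alphaW αX αY αZ f g φ d.1 = αY b) := by
  classical
  -- Basic finiteness and positivity facts
  have hPZfin : ∀ c c', PZ c c' ≠ ⊤ := fun c c' =>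
    ne_top_of_le_ne_top ENNReal.one_ne_top
      (le_trans (ENNReal.le_tsum c') (le_of_eq (hZ.2.2.1 c)))
  have hαXfin : ∀ a, αX a ≠ ⊤ := fun a =>
    ne_top_of_le_ne_top ENNReal.one_ne_top
      (le_trans (ENNReal.le_tsum a) (le_of_eq hX.2.1))
  have hαXle : ∀ a, αX a ≤ 1 := fun a =>
    le_trans (ENNReal.le_tsum a) (le_of_eq hX.2.1)
  have hαYle : ∀ b, αY b ≤ 1 := fun b =>
    le_trans (ENNReal.le_tsum b) (le_of_eq hY.2.1)
  have hαZfin : ∀ c, αZ c ≠ ⊤ := fun c =>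
    ne_top_of_le_ne_top ENNReal.one_ne_top
      (le_trans (ENNReal.le_tsum c) (le_of_eq hZ.2.1))
  have hPXPZ : ∀ a a', PX a a' ≠ 0 → PZ (f a) (f a') ≠ 0 :=
    pos_step hX hZ f hfX hAvis
  have hPYPZ : ∀ b b', PY b b' ≠ 0 → PZ (g b) (g b') ≠ 0 :=
    pos_step hY hZ g hgY hBvis
  have I0Y : ∀ c, (∑' b, (if g b = c then αY b else 0)) = αZ c := init_mass hY hZ g hgY
  have I0X : ∀ c, (∑' a, (if f a = c then αX a else 0)) = αZ c := init_mass hX hZ f hfX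
  have hzeroX : ∀ a, αZ (f a) = 0 → αX a = 0 := by
    intro a h0
    have h1 := I0X (f a)
    rw [h0] at h1
    have h2 := ENNReal.tsum_eq_zero.mp h1 a
    simpa using h2
  have hzeroY : ∀ b, αZ (g b) = 0 → αY b = 0 := by
    intro b h0
    have h1 := I0Y (g b)
    rw [h0] at h1
    have h2 := ENNReal.tsum_eq_zero.mp h1 b
    simpa using h2
  set R : Delta f g → Delta f g → ℝ≥0∞ := Rmat PX PY PZ f g with hRdef
  set F : ℕ → Delta f g → ℝ≥0∞ := fun m => alphaW αX αY αZ f g (phim R m) with hFdef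
  set G : Delta f g → ℝ≥0∞ := alphaW αX αY αZ f g φ with hGdef
  -- level-m marginals
  have M1 : ∀ (m : ℕ) (a : A),
      (∑' b' : {b : B // f a = g b}, F m ⟨(a, b'.1), b'.2⟩) = αX a := by
    intro m a
    by_cases h0 : αZ (f a) = 0
    · have hzero : ∀ b' : {b : B // f a = g b}, F m ⟨(a, b'.1), b'.2⟩ = 0 := by
        intro b'
        show (if αZ (f a) ≠ 0 then _ else 0) = 0
        rw [if_neg (by simpa using h0)]
      rw [tsum_congr hzero, tsum_zero, hzeroX a h0]
    · have hstep : ∀ b' : {b : B // f a = g b},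
          F m ⟨(a, b'.1), b'.2⟩ = αX a / αZ (f a)
            * ((if g b'.1 = f a then αY b'.1 else 0) * phim R m ⟨(a, b'.1), b'.2⟩) := by
        intro b'
        show (if αZ (f a) ≠ 0 then αX a * αY b'.1 / αZ (f a) * phim R m ⟨(a, b'.1), b'.2⟩
            else 0) = _
        rw [if_pos h0, if_pos b'.2.symm, ENNReal.div_eq_inv_mul, ENNReal.div_eq_inv_mul]
        ring
      rw [tsum_congr hstep, ENNReal.tsum_mul_left]
      rw [tsum_subtype_dite (fun b => f a = g b)
        (fun b h => (if g b = f a then αY b else 0) * phim R m ⟨(a, b), h⟩)]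
      rw [keyL PX PY PZ f g hX.2.2.1 hPZfin hPXPZ m a _
        (goodW_init hY hZ g hgY (f a))
        (fun b hb => by
          by_contra hc
          exact hb (if_neg hc))
        (by rw [I0Y (f a)]; exact hαZfin (f a))]
      rw [I0Y (f a)]
      exact ENNReal.div_mul_cancel h0 (hαZfin (f a))
  have M2 : ∀ (m : ℕ) (b : B),
      (∑' a' : {a : A // f a = g b}, F m ⟨(a'.1, b), a'.2⟩) = αY b := by
    intro m b
    by_cases h0 : αZ (g b) = 0
    · have hzero : ∀ a' : {a : A // f a = g b}, F m ⟨(a'.1, b), a'.2⟩ = 0 := by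
        intro a'
        show (if αZ (f a'.1) ≠ 0 then _ else 0) = 0
        rw [if_neg (by rw [a'.2]; simpa using h0)]
      rw [tsum_congr hzero, tsum_zero, hzeroY b h0]
    · have hstep : ∀ a' : {a : A // f a = g b},
          F m ⟨(a'.1, b), a'.2⟩ = αY b / αZ (g b)
            * ((if f a'.1 = g b then αX a'.1 else 0)
              * phim (Rmat PY PX PZ g f) m ⟨(b, a'.1), a'.2.symm⟩) := by
        intro a'
        show (if αZ (f a'.1) ≠ 0 then αX a'.1 * αY b / αZ (f a'.1)
            * phim R m ⟨(a'.1, b), a'.2⟩ else 0) = _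
        have hswap : phim (Rmat PY PX PZ g f) m ⟨(b, a'.1), a'.2.symm⟩
            = phim R m ⟨(a'.1, b), a'.2⟩ := by
          have := phim_swap PX PY PZ f g m ⟨(a'.1, b), a'.2⟩
          exact this
        rw [hswap, a'.2]
        rw [if_pos (show αZ (g b) ≠ 0 by simpa using h0)]
        rw [if_pos (rfl : g b = g b)]
        rw [ENNReal.div_eq_inv_mul, ENNReal.div_eq_inv_mul]
        ring
      rw [tsum_congr hstep, ENNReal.tsum_mul_left]
      rw [tsum_subtype_dite (fun a => f a = g b)
        (fun a h => (if f a = g b then αX a else 0)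
          * phim (Rmat PY PX PZ g f) m ⟨(b, a), h.symm⟩)]
      have hconvert : (∑' a : A, if h : f a = g b then
            (if f a = g b then αX a else 0) * phim (Rmat PY PX PZ g f) m ⟨(b, a), h.symm⟩
          else 0)
          = ∑' a : A, if h : g b = f a then
            (if f a = g b then αX a else 0) * phim (Rmat PY PX PZ g f) m ⟨(b, a), h⟩
          else 0 := by
        refine tsum_congr fun a => ?_
        by_cases h : f a = g b
        · rw [dif_pos h, dif_pos h.symm]
        · rw [dif_neg h, dif_neg fun hh => h hh.symm]
      rw [hconvert]
      rw [keyL PY PX PZ g f hY.2.2.1 hPZfin hPYPZ m b _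
        (goodW_init hX hZ f hfX (g b))
        (fun a ha => by
          by_contra hc
          exact ha (if_neg hc))
        (by rw [I0X (g b)]; exact hαZfin (g b))]
      rw [I0X (g b)]
      exact ENNReal.div_mul_cancel h0 (hαZfin (g b))
  have Tot : ∀ m, (∑' d, F m d) = 1 := by
    intro m
    rw [tsum_delta_fst f g (F m)]
    rw [tsum_congr (M1 m)]
    exact hX.2.1
  -- convergence of the level-m vectors
  have hcfin : ∀ d : Delta f g,
      (if αZ (f d.1.1) ≠ 0 then αX d.1.1 * αY d.1.2 / αZ (f d.1.1) else 0) ≠ ⊤ := by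
    intro d
    split_ifs with h
    · exact (ENNReal.div_lt_top (ENNReal.mul_ne_top (hαXfin d.1.1)
        (ne_top_of_le_ne_top ENNReal.one_ne_top (hαYle d.1.2))) h).ne
    · exact ENNReal.zero_ne_top
  have hGsplit : ∀ (ψ : Delta f g → ℝ≥0∞) (d : Delta f g),
      alphaW αX αY αZ f g ψ d
        = (if αZ (f d.1.1) ≠ 0 then αX d.1.1 * αY d.1.2 / αZ (f d.1.1) else 0) * ψ d := by
    intro ψ d
    rw [alphaW]
    split_ifs with h
    · rfl
    · rw [zero_mul]
  have hconv : ∀ d : Delta f g, Tendsto (fun m => F m d) atTop (𝓝 (G d)) := by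
    intro d
    have h1 : (fun m => F m d) = fun m =>
        (if αZ (f d.1.1) ≠ 0 then αX d.1.1 * αY d.1.2 / αZ (f d.1.1) else 0) * phim R m d :=
      funext fun m => hGsplit (phim R m) d
    rw [h1, hGdef, hGsplit φ d]
    exact ENNReal.Tendsto.const_mul (hφ d) (Or.inr (hcfin d))
  -- upper bounds
  have hup_tot : (∑' d, G d) ≤ 1 :=
    tsum_le_of_tendsto hconv fun m => le_of_eq (Tot m)
  -- lower bound via tightness
  have key : ∀ (sA : Finset A) (sB : Finset B),
      (1 : ℝ≥0∞) ≤ (∑' d, G d) + (∑' a : {a : A // a ∉ sA}, αX a.1)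
        + (∑' b : {b : B // b ∉ sB}, αY b.1) := by
    intro sA sB
    have hfinset : {d : Delta f g | d.1.1 ∈ sA ∧ d.1.2 ∈ sB}.Finite := by
      have hsub : {d : Delta f g | d.1.1 ∈ sA ∧ d.1.2 ∈ sB}
          ⊆ Subtype.val ⁻¹' (↑(sA ×ˢ sB) : Set (A × B)) := by
        intro d hd
        simp only [Set.mem_preimage, Finset.coe_product, Set.mem_prod, Finset.mem_coe]
        exact hd
      exact Set.Finite.subset
        (Set.Finite.preimage (Subtype.val_injective.injOn) (sA ×ˢ sB).finite_toSet) hsub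
    set s : Finset (Delta f g) := hfinset.toFinset with hsdef
    have tailA : (∑' d : Delta f g, (if d.1.1 ∉ sA then F 0 d else 0)) = 0 → True := fun _ => trivial
    have hcov : ∀ m, (1 : ℝ≥0∞) ≤ (∑ d ∈ s, F m d)
        + (∑' a : {a : A // a ∉ sA}, αX a.1) + (∑' b : {b : B // b ∉ sB}, αY b.1) := by
      intro m
      have h1 : (∑' d, F m d) ≤ (∑' d, (if d ∈ s then F m d else 0))
          + (∑' d, (if d.1.1 ∉ sA then F m d else 0))
          + (∑' d, (if d.1.2 ∉ sB then F m d else 0)) := by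
        rw [← ENNReal.tsum_add, ← ENNReal.tsum_add]
        refine Summable.tsum_le_tsum (fun d => ?_) ENNReal.summable ENNReal.summable
        by_cases h1 : d.1.1 ∈ sA
        · by_cases h2 : d.1.2 ∈ sB
          · have hds : d ∈ s := by
              rw [hsdef, Set.Finite.mem_toFinset]
              exact ⟨h1, h2⟩
            rw [if_pos hds]
            exact le_add_right (le_add_right le_rfl)
          · rw [if_pos h2]
            exact le_add_left le_rfl
        · rw [if_pos h1]
          exact le_add_right (le_add_left le_rfl)
      have e1 : (∑' d, (if d ∈ s then F m d else 0)) = ∑ d ∈ s, F m d := by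
        rw [tsum_eq_sum (fun d hd => if_neg hd)]
        exact Finset.sum_congr rfl fun d hd => if_pos hd
      have e2 : (∑' d, (if d.1.1 ∉ sA then F m d else 0))
          = ∑' a : {a : A // a ∉ sA}, αX a.1 := by
        rw [tsum_delta_fst f g (fun d => if d.1.1 ∉ sA then F m d else 0)]
        have hinner : ∀ a : A,
            (∑' b' : {b : B // f a = g b}, (if a ∉ sA then F m ⟨(a, b'.1), b'.2⟩ else 0))
              = (if a ∉ sA then αX a else 0) := by
          intro a
          by_cases ha : a ∉ sA
          · simp only [if_pos ha]
            exact M1 m a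
          · simp only [if_neg ha]
            exact tsum_zero
        rw [tsum_congr hinner]
        rw [tsum_subtype_dite (fun a => a ∉ sA) (fun a _ => αX a)]
        refine tsum_congr fun a => ?_
        by_cases ha : a ∉ sA <;> simp [ha]
      have e3 : (∑' d, (if d.1.2 ∉ sB then F m d else 0))
          = ∑' b : {b : B // b ∉ sB}, αY b.1 := by
        rw [tsum_delta_snd f g (fun d => if d.1.2 ∉ sB then F m d else 0)]
        have hinner : ∀ b : B,
            (∑' a' : {a : A // f a = g b}, (if b ∉ sB then F m ⟨(a'.1, b), a'.2⟩ else 0))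
              = (if b ∉ sB then αY b else 0) := by
          intro b
          by_cases hb : b ∉ sB
          · simp only [if_pos hb]
            exact M2 m b
          · simp only [if_neg hb]
            exact tsum_zero
        rw [tsum_congr hinner]
        rw [tsum_subtype_dite (fun b => b ∉ sB) (fun b _ => αY b)]
        refine tsum_congr fun b => ?_
        by_cases hb : b ∉ sB <;> simp [hb]
      calc (1 : ℝ≥0∞) = ∑' d, F m d := (Tot m).symm
        _ ≤ _ := h1
        _ = _ := by rw [e1, e2, e3]
    have hlim : Tendsto (fun m => (∑ d ∈ s, F m d)
        + (∑' a : {a : A // a ∉ sA}, αX a.1) + (∑' b : {b : B // b ∉ sB}, αY b.1)) atTop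
        (𝓝 ((∑ d ∈ s, G d) + (∑' a : {a : A // a ∉ sA}, αX a.1)
          + (∑' b : {b : B // b ∉ sB}, αY b.1))) := by
      refine Tendsto.add (Tendsto.add ?_ tendsto_const_nhds) tendsto_const_nhds
      exact tendsto_finset_sum s fun d _ => hconv d
    have h2 := ge_of_tendsto hlim (Eventually.of_forall hcov)
    refine le_trans h2 ?_
    exact add_le_add_left (add_le_add_left (ENNReal.sum_le_tsum s) _) _
  have hlow : (1 : ℝ≥0∞) ≤ ∑' d, G d := by
    refine ENNReal.le_of_forall_pos_le_add fun ε hε _ => ?_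
    have hA := ENNReal.tendsto_tsum_compl_atTop_zero (f := αX)
      (by rw [hX.2.1]; exact ENNReal.one_ne_top)
    have hB := ENNReal.tendsto_tsum_compl_atTop_zero (f := αY)
      (by rw [hY.2.1]; exact ENNReal.one_ne_top)
    have hhalf : (0 : ℝ≥0∞) < (ε : ℝ≥0∞) / 2 :=
      ENNReal.div_pos (by exact_mod_cast hε.ne') ENNReal.ofNat_ne_top
    obtain ⟨sA, hsA⟩ := (hA.eventually_lt_const hhalf).exists
    obtain ⟨sB, hsB⟩ := (hB.eventually_lt_const hhalf).exists
    calc (1 : ℝ≥0∞) ≤ (∑' d, G d) + (∑' a : {a : A // a ∉ sA}, αX a.1)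
          + (∑' b : {b : B // b ∉ sB}, αY b.1) := key sA sB
      _ ≤ (∑' d, G d) + (ε : ℝ≥0∞) / 2 + (ε : ℝ≥0∞) / 2 :=
          add_le_add (add_le_add le_rfl hsA.le) hsB.le
      _ = (∑' d, G d) + (ε : ℝ≥0∞) := by rw [add_assoc, ENNReal.add_halves]
  have hTot : (∑' d, G d) = 1 := le_antisymm hup_tot hlow
  -- limit marginals
  have hAle : ∀ a, (∑' b' : {b : B // f a = g b}, G ⟨(a, b'.1), b'.2⟩) ≤ αX a := fun a =>
    tsum_le_of_tendsto (fun b' => hconv ⟨(a, b'.1), b'.2⟩) fun m => le_of_eq (M1 m a)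
  have hBle : ∀ b, (∑' a' : {a : A // f a = g b}, G ⟨(a'.1, b), a'.2⟩) ≤ αY b := fun b =>
    tsum_le_of_tendsto (fun a' => hconv ⟨(a'.1, b), a'.2⟩) fun m => le_of_eq (M2 m b)
  have hsumA : (∑' a : A, ∑' b' : {b : B // f a = g b}, G ⟨(a, b'.1), b'.2⟩) = 1 := by
    rw [← tsum_delta_fst f g G]
    exact hTot
  have hsumB : (∑' b : B, ∑' a' : {a : A // f a = g b}, G ⟨(a'.1, b), a'.2⟩) = 1 := by
    rw [← tsum_delta_snd f g G]
    exact hTot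
  have hA_eq : ∀ a, (∑' b' : {b : B // f a = g b}, G ⟨(a, b'.1), b'.2⟩) = αX a := by
    intro a
    refine tsum_pinch hAle ?_ ?_ a
    · rw [hX.2.1, hsumA]
    · rw [hX.2.1]; exact ENNReal.one_ne_top
  have hB_eq : ∀ b, (∑' a' : {a : A // f a = g b}, G ⟨(a'.1, b), a'.2⟩) = αY b := by
    intro b
    refine tsum_pinch hBle ?_ ?_ b
    · rw [hY.2.1, hsumB]
    · rw [hY.2.1]; exact ENNReal.one_ne_top
  refine ⟨hTot, ?_, ?_⟩
  · intro a
    rw [← (fibEquivA f g a).tsum_eq (fun d => G d.1)]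
    exact hA_eq a
  · intro b
    rw [← (fibEquivB f g b).tsum_eq (fun d => G d.1)]
    exact hB_eq b
end

section
/- In the standing setup, the limit vector φ is a non-negative right eigenvector of R with eigenvalue 1 on Δ'; equivalently, the matrix P on Δ' defined by P((a,b),(a',b')) = R((a,b),(a',b'))·φ(a',b')/φ(a,b) is row-stochastic: Σ_{(a',b')∈Δ'} P((a,b),(a',b')) = 1 for every (a,b) ∈ Δ'. -/
open MeasureTheory Filter Topology
open scoped ENNReal Classical

set_option linter.unusedSectionVars false

namespace S12

variable {A B C : Type*}

noncomputable def Qw (PZ : C → C → ℝ≥0∞) : C → List C → ℝ≥0∞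
  | _, [] => 1
  | c, c' :: cs => PZ c c' * Qw PZ c' cs

def wlast : C → List C → C
  | c, [] => c
  | _, c' :: cs => wlast c' cs

lemma wlast_snoc (c c' : C) (w : List C) : wlast c (w ++ [c']) = c' := by
  induction w generalizing c with
  | nil => rfl
  | cons d cs ih => simpa [wlast] using ih d

lemma Qw_snoc (PZ : C → C → ℝ≥0∞) (c c' : C) (w : List C) :
    Qw PZ c (w ++ [c']) = Qw PZ c w * PZ (wlast c w) c' := by
  induction w generalizing c with
  | nil => simp [Qw, wlast]
  | cons d cs ih => simp [Qw, wlast, ih d, mul_assoc]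

noncomputable def aggB (PY : B → B → ℝ≥0∞) (g : B → C) : B → List C → (B → ℝ≥0∞) → ℝ≥0∞
  | b, [], h => h b
  | b, c :: cs, h => ∑' b', if g b' = c then PY b b' * aggB PY g b' cs h else 0

noncomputable def vpath (PY : B → B → ℝ≥0∞) (g : B → C) (b : B) (w : List C) : ℝ≥0∞ :=
  aggB PY g b w (fun _ => 1)

variable {PY : B → B → ℝ≥0∞} {g : B → C}

lemma aggB_mono {h h' : B → ℝ≥0∞} (hh : ∀ b, h b ≤ h' b) (b : B) (w : List C) :
    aggB PY g b w h ≤ aggB PY g b w h' := by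
  induction w generalizing b with
  | nil => exact hh b
  | cons c cs ih =>
      refine ENNReal.tsum_le_tsum fun b' => ?_
      by_cases hgb : g b' = c
      · simp only [hgb, if_true]
        exact mul_le_mul_right (ih b') _
      · simp [hgb]

lemma aggB_congr {h h' : B → ℝ≥0∞} (b : B) (w : List C) (c : C)
    (hh : ∀ b', g b' = c → h b' = h' b') :
    aggB PY g b (w ++ [c]) h = aggB PY g b (w ++ [c]) h' := by
  induction w generalizing b with
  | nil =>
      simp only [List.nil_append, aggB]
      refine tsum_congr fun b' => ?_
      by_cases hgb : g b' = c
      · simp [hgb, aggB, hh b' hgb]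
      · simp [hgb]
  | cons d ds ih =>
      simp only [List.cons_append, aggB]
      refine tsum_congr fun b' => ?_
      by_cases hgb : g b' = d
      · simp [hgb, ih b']
      · simp [hgb]

lemma aggB_tsum {ι : Type*} (h : ι → B → ℝ≥0∞) (b : B) (w : List C) :
    aggB PY g b w (fun b'' => ∑' i, h i b'') = ∑' i, aggB PY g b w (h i) := by
  induction w generalizing b with
  | nil => rfl
  | cons c cs ih =>
      simp only [aggB]
      have key : ∀ b' : B, (if g b' = c then PY b b' * aggB PY g b' cs (fun b'' => ∑' i, h i b'') else 0)
          = ∑' i, (if g b' = c then PY b b' * aggB PY g b' cs (h i) else 0) := by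
        intro b'
        by_cases hgb : g b' = c
        · simp only [hgb, if_true, ih b', ENNReal.tsum_mul_left]
        · simp [hgb]
      rw [tsum_congr key, ENNReal.tsum_comm]

lemma aggB_const_mul (r : ℝ≥0∞) (h : B → ℝ≥0∞) (b : B) (w : List C) :
    aggB PY g b w (fun b'' => r * h b'') = r * aggB PY g b w h := by
  induction w generalizing b with
  | nil => rfl
  | cons c cs ih =>
      simp only [aggB]
      rw [← ENNReal.tsum_mul_left]
      refine tsum_congr fun b' => ?_
      by_cases hgb : g b' = c
      · simp [hgb, ih b']; ring
      · simp [hgb]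

lemma aggB_snoc (h : B → ℝ≥0∞) (b : B) (w : List C) (c : C) :
    aggB PY g b (w ++ [c]) h
      = aggB PY g b w (fun bk => ∑' b', if g b' = c then PY bk b' * h b' else 0) := by
  induction w generalizing b with
  | nil => rfl
  | cons d ds ih =>
      simp only [List.cons_append, aggB]
      refine tsum_congr fun b' => ?_
      by_cases hgb : g b' = d
      · simp [hgb, ih b']
      · simp [hgb]


section Generic

variable {PX : A → A → ℝ≥0∞} {PZ : C → C → ℝ≥0∞} {f : A → C}
variable {x : ℕ → A → B → ℝ≥0∞} {κ : B → ℝ≥0∞}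

theorem G_lemma
    (hrec : ∀ m a b, f a = g b → x (m+1) a b =
      ∑' a', ∑' b', if (f a' = g b' ∧ PZ (f a) (f a') ≠ 0)
        then PX a a' * PY b b' / PZ (f a) (f a') * x m a' b' else 0)
    (hx0 : ∀ a b, x 0 a b ≤ 1)
    (hrowX : ∀ a, ∑' a', PX a a' ≤ 1)
    (hPZtop : ∀ c c', PZ c c' ≠ ⊤)
    (hκ : ∀ b w, vpath PY g b w ≤ κ b * Qw PZ (g b) w) :
    ∀ m (w : List C) (b : B) (a' : A),
      aggB PY g b (w ++ [f a']) (fun b'' => if f a' = g b'' then x m a' b'' else 0)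
        ≤ κ b * Qw PZ (g b) (w ++ [f a']) := by
  intro m
  induction m with
  | zero =>
      intro w b a'
      refine le_trans (le_trans (aggB_mono (fun b'' => ?_) b (w ++ [f a'])) le_rfl) (hκ b _)
      by_cases hh : f a' = g b''
      · simpa [hh] using hx0 a' b''
      · simp [hh]
  | succ m ih =>
      intro w b a'
      set scal : A → ℝ≥0∞ := fun a'' => if PZ (f a') (f a'') ≠ 0 then PX a' a'' / PZ (f a') (f a'') else 0 with hscal
      set inner : A → B → ℝ≥0∞ := fun a'' bk => ∑' b''', if f a'' = g b''' then PY bk b''' * x m a'' b''' else 0 with hinner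
      have step1 : aggB PY g b (w ++ [f a']) (fun b'' => if f a' = g b'' then x (m+1) a' b'' else 0)
          = aggB PY g b (w ++ [f a']) (fun b'' => ∑' a'', scal a'' * inner a'' b'') := by
        refine aggB_congr b w (f a') fun b'' hb'' => ?_
        have hfg : f a' = g b'' := hb''.symm
        rw [if_pos hfg, hrec m a' b'' hfg]
        refine tsum_congr fun a'' => ?_
        by_cases hz : PZ (f a') (f a'') ≠ 0
        · simp only [hscal, hinner, if_pos hz, ← ENNReal.tsum_mul_left]
          refine tsum_congr fun b''' => ?_
          by_cases hd : f a'' = g b'''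
          · rw [if_pos (show f a'' = g b''' ∧ PZ (f a') (f a'') ≠ 0 from ⟨hd, hz⟩), if_pos hd,
              div_eq_mul_inv, div_eq_mul_inv]
            ring
          · simp [hd]
        · push_neg at hz
          simp only [hscal, hz, ne_eq, not_true_eq_false, if_false, zero_mul, tsum_zero]
          refine (tsum_congr fun b''' => ?_).trans tsum_zero
          simp [hz]
      have step2 : aggB PY g b (w ++ [f a']) (fun b'' => ∑' a'', scal a'' * inner a'' b'')
          = ∑' a'', scal a'' * aggB PY g b (w ++ [f a']) (inner a'') := by
        rw [aggB_tsum (h := fun a'' bk => scal a'' * inner a'' bk)]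
        exact tsum_congr fun a'' => aggB_const_mul _ _ _ _
      have step3 : ∀ a'', aggB PY g b (w ++ [f a']) (inner a'')
          ≤ κ b * Qw PZ (g b) (w ++ [f a']) * PZ (f a') (f a'') := by
        intro a''
        have h1 : aggB PY g b (w ++ [f a']) (inner a'')
            = aggB PY g b ((w ++ [f a']) ++ [f a''])
                (fun b''' => if f a'' = g b''' then x m a'' b''' else 0) := by
          conv_rhs => rw [aggB_snoc]
          refine congrArg (aggB PY g b (w ++ [f a'])) ?_
          funext bk
          simp only [hinner]
          refine tsum_congr fun b''' => ?_
          by_cases hd : g b''' = f a''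
          · rw [if_pos hd.symm, if_pos hd, if_pos hd.symm]
          · have hd2 : ¬ (f a'' = g b''') := fun hc => hd hc.symm
            rw [if_neg hd2, if_neg hd]
        rw [h1]
        refine le_trans (ih ((w ++ [f a'])) b a'') ?_
        rw [Qw_snoc, wlast_snoc, mul_assoc]
      calc aggB PY g b (w ++ [f a']) (fun b'' => if f a' = g b'' then x (m+1) a' b'' else 0)
          = ∑' a'', scal a'' * aggB PY g b (w ++ [f a']) (inner a'') := by rw [step1, step2]
        _ ≤ ∑' a'', κ b * Qw PZ (g b) (w ++ [f a']) * (scal a'' * PZ (f a') (f a'')) := by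
            refine ENNReal.tsum_le_tsum fun a'' => ?_
            calc scal a'' * aggB PY g b (w ++ [f a']) (inner a'')
                ≤ scal a'' * (κ b * Qw PZ (g b) (w ++ [f a']) * PZ (f a') (f a'')) :=
                  mul_le_mul_right (step3 a'') _
              _ = κ b * Qw PZ (g b) (w ++ [f a']) * (scal a'' * PZ (f a') (f a'')) := by ring
        _ ≤ ∑' a'', κ b * Qw PZ (g b) (w ++ [f a']) * PX a' a'' := by
            refine ENNReal.tsum_le_tsum fun a'' => mul_le_mul_right ?_ _
            by_cases hz : PZ (f a') (f a'') ≠ 0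
            · simp only [hscal, if_pos hz]
              rw [ENNReal.div_mul_cancel hz (hPZtop _ _)]
            · push_neg at hz
              simp [hscal, hz]
        _ = κ b * Qw PZ (g b) (w ++ [f a']) * ∑' a'', PX a' a'' := ENNReal.tsum_mul_left
        _ ≤ κ b * Qw PZ (g b) (w ++ [f a']) * 1 := mul_le_mul_right (hrowX a') _
        _ = κ b * Qw PZ (g b) (w ++ [f a']) := mul_one _


theorem IB_lemma
    (hrec : ∀ m a b, f a = g b → x (m+1) a b =
      ∑' a', ∑' b', if (f a' = g b' ∧ PZ (f a) (f a') ≠ 0)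
        then PX a a' * PY b b' / PZ (f a) (f a') * x m a' b' else 0)
    (hx0 : ∀ a b, x 0 a b ≤ 1)
    (hrowX : ∀ a, ∑' a', PX a a' ≤ 1)
    (hPZtop : ∀ c c', PZ c c' ≠ ⊤)
    (hκ : ∀ b w, vpath PY g b w ≤ κ b * Qw PZ (g b) w) :
    ∀ (m : ℕ) (b : B) (a' : A),
      (∑' b', if f a' = g b' then PY b b' * x m a' b' else 0) ≤ κ b * PZ (g b) (f a') := by
  intro m b a'
  have h1 : (∑' b', if f a' = g b' then PY b b' * x m a' b' else 0)
      = aggB PY g b ([] ++ [f a']) (fun b'' => if f a' = g b'' then x m a' b'' else 0) := by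
    simp only [List.nil_append, aggB]
    refine tsum_congr fun b' => ?_
    by_cases hgb : g b' = f a'
    · rw [if_pos hgb.symm, if_pos hgb, if_pos hgb.symm]
    · rw [if_neg (fun hc => hgb hc.symm), if_neg hgb]
  rw [h1]
  refine le_trans (G_lemma hrec hx0 hrowX hPZtop hκ m [] b a') ?_
  simp [Qw]

end Generic

lemma exists_tail {α : Type*} (F : α → ℝ≥0∞) (hT : ∑' a, F a ≠ ⊤) {δ : ℝ≥0∞} (hδ : δ ≠ 0) :
    ∃ s : Finset α, (∑' a, if a ∉ s then F a else 0) ≤ δ := by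
  classical
  by_cases hle : (∑' a, F a) ≤ δ
  · refine ⟨∅, le_trans (le_of_eq (tsum_congr fun a => by simp)) hle⟩
  · push_neg at hle
    have hT0 : (∑' a, F a) ≠ 0 := fun h0 => by simp [h0] at hle
    have hlt : (∑' a, F a) - δ < ∑' a, F a := ENNReal.sub_lt_self hT hT0 hδ
    rw [ENNReal.tsum_eq_iSup_sum] at hlt
    obtain ⟨s, hs⟩ := lt_iSup_iff.1 hlt
    rw [← ENNReal.tsum_eq_iSup_sum] at hs
    refine ⟨s, ?_⟩
    have e1 : (∑' x : ↑((↑s : Set α)ᶜ), F ↑x) = ∑' a, if a ∉ s then F a else 0 := by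
      rw [tsum_subtype ((↑s : Set α)ᶜ) F]
      exact tsum_congr fun a => by by_cases h : a ∈ s <;> simp [Set.indicator_apply, h]
    have hsum : (∑ a ∈ s, F a) + (∑' a, if a ∉ s then F a else 0) = ∑' a, F a := by
      calc (∑ a ∈ s, F a) + (∑' a, if a ∉ s then F a else 0)
          = (∑' x : ↑(↑s : Set α), F ↑x) + (∑' x : ↑((↑s : Set α)ᶜ), F ↑x) := by
            rw [Finset.tsum_subtype' s F, e1]
        _ = ∑' a, F a := Summable.tsum_add_tsum_compl ENNReal.summable ENNReal.summable
    have hTle : (∑' a, F a) ≤ (∑ a ∈ s, F a) + δ := by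
      calc (∑' a, F a) ≤ ((∑' a, F a) - δ) + δ := le_tsub_add
        _ ≤ (∑ a ∈ s, F a) + δ := add_le_add_left hs.le _
    have hfin : (∑ a ∈ s, F a) ≠ ⊤ := ne_top_of_le_ne_top hT (ENNReal.sum_le_tsum s)
    rw [← hsum] at hTle
    exact (ENNReal.add_le_add_iff_left hfin).1 hTle

lemma vpath_nil (PY : B → B → ℝ≥0∞) (g : B → C) (b : B) : vpath PY g b [] = 1 := rfl

lemma vpath_cons (PY : B → B → ℝ≥0∞) (g : B → C) (b : B) (c : C) (cs : List C) :
    vpath PY g b (c :: cs) = ∑' b', if g b' = c then PY b b' * vpath PY g b' cs else 0 := rfl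

section Meas

variable [MeasurableSpace B] [MeasurableSingletonClass B] [Countable B]
variable [MeasurableSpace C] [MeasurableSingletonClass C]

lemma measSet_cyl {U : Type*} [MeasurableSpace U] [MeasurableSingletonClass U]
    (k : ℕ) (a : ℕ → U) : MeasurableSet {ω : ℕ → U | ∀ i ≤ k, ω i = a i} := by
  have h : {ω : ℕ → U | ∀ i ≤ k, ω i = a i}
      = ⋂ (i : ℕ) (_ : i ≤ k), (fun ω : ℕ → U => ω i) ⁻¹' {a i} := by
    ext ω; simp
  rw [h]
  exact MeasurableSet.iInter fun i => MeasurableSet.iInter fun _ =>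
    (measurable_pi_apply i) (measurableSet_singleton _)

lemma measSet_E (g : B → C) (t : ℕ) (a : ℕ → B) (w : List C) (d0 : C) :
    MeasurableSet {ω : ℕ → B |
      (∀ i ≤ t, ω i = a i) ∧ ∀ j, j < w.length → g (ω (t+1+j)) = w.getD j d0} := by
  have h : {ω : ℕ → B | (∀ i ≤ t, ω i = a i) ∧ ∀ j, j < w.length → g (ω (t+1+j)) = w.getD j d0}
      = {ω : ℕ → B | ∀ i ≤ t, ω i = a i} ∩
        ⋂ (j : ℕ) (_ : j < w.length), (fun ω : ℕ → B => ω (t+1+j)) ⁻¹' (g ⁻¹' {w.getD j d0}) := by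
    ext ω; simp [Set.mem_iInter]
  rw [h]
  exact (measSet_cyl t a).inter <| MeasurableSet.iInter fun j => MeasurableSet.iInter fun _ =>
    (measurable_pi_apply _) ((measurable_of_countable g) (measurableSet_singleton _))

lemma exists_hist (μY : Measure (ℕ → B)) (t : ℕ) (b : B) (hvis : μY {ω | ω t = b} ≠ 0) :
    ∃ a : ℕ → B, a t = b ∧ μY {ω | ∀ i ≤ t, ω i = a i} ≠ 0 := by
  by_contra hcon
  push_neg at hcon
  apply hvis
  have hsub : {ω : ℕ → B | ω t = b} ⊆
      ⋃ v : {v : Fin (t+1) → B // v ⟨t, Nat.lt_succ_self t⟩ = b},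
        {ω : ℕ → B | ∀ i ≤ t, ω i = (fun i : ℕ => if h : i ≤ t then v.1 ⟨i, Nat.lt_succ_of_le h⟩ else b) i} := by
    intro ω hω
    refine Set.mem_iUnion.2 ⟨⟨fun i => ω i, by simpa using hω⟩, ?_⟩
    intro i hi
    simp [hi]
  refine le_antisymm (le_trans (measure_mono hsub) ?_) zero_le
  rw [measure_iUnion_null fun v => ?_]
  exact hcon _ (by simpa using v.2)

lemma map_g_measurable (g : B → C) : Measurable (fun (ω : ℕ → B) (n : ℕ) => g (ω n)) :=
  measurable_pi_lambda _ fun n => (measurable_of_countable g).comp (measurable_pi_apply n)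

variable {αY : B → ℝ≥0∞} {PY : B → B → ℝ≥0∞} {μY : Measure (ℕ → B)}
variable {αZ : C → ℝ≥0∞} {PZ : C → C → ℝ≥0∞} {μZ : Measure (ℕ → C)}
variable {g : B → C}

lemma muE (hY : IsMarkovChain αY PY μY) (d0 : C) :
    ∀ (w : List C) (t : ℕ) (a : ℕ → B),
      μY {ω | (∀ i ≤ t, ω i = a i) ∧ ∀ j, j < w.length → g (ω (t+1+j)) = w.getD j d0}
        = (αY (a 0) * ∏ i ∈ Finset.range t, PY (a i) (a (i+1))) * vpath PY g (a t) w := by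
  intro w
  induction w with
  | nil =>
      intro t a
      have h : {ω : ℕ → B | (∀ i ≤ t, ω i = a i) ∧ ∀ j, j < ([] : List C).length → g (ω (t+1+j)) = ([] : List C).getD j d0}
          = {ω : ℕ → B | ∀ i ≤ t, ω i = a i} := by ext ω; simp
      rw [h, hY.2.2.2 t a, vpath_nil, mul_one]
  | cons c cs ih =>
      intro t a
      set S : B → Set (ℕ → B) := fun b' =>
        if g b' = c then
          {ω | (∀ i ≤ t+1, ω i = Function.update a (t+1) b' i) ∧
            ∀ j, j < cs.length → g (ω (t+1+1+j)) = cs.getD j d0}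
        else ∅ with hS
      have hE : {ω : ℕ → B | (∀ i ≤ t, ω i = a i) ∧
          ∀ j, j < (c :: cs).length → g (ω (t+1+j)) = (c :: cs).getD j d0} = ⋃ b', S b' := by
        ext ω
        constructor
        · rintro ⟨h1, h2⟩
          have hg : g (ω (t+1)) = c := by
            have := h2 0 (by simp)
            simpa using this
          refine Set.mem_iUnion.2 ⟨ω (t+1), ?_⟩
          simp only [hS, hg, if_true, Set.mem_setOf_eq]
          refine ⟨fun i hi => ?_, fun j hj => ?_⟩
          · rcases Nat.lt_or_ge i (t+1) with hlt | hge
            · rw [Function.update_of_ne (by omega)]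
              exact h1 i (by omega)
            · have : i = t+1 := by omega
              rw [this, Function.update_self]
          · have := h2 (j+1) (by simp; omega)
            have harith : t+1+(j+1) = t+1+1+j := by omega
            rw [harith] at this
            simpa using this
        · intro hω
          rcases Set.mem_iUnion.1 hω with ⟨b', hb'⟩
          by_cases hg : g b' = c
          · simp only [hS, hg, if_true, Set.mem_setOf_eq] at hb'
            obtain ⟨h1, h2⟩ := hb'
            have hωt1 : ω (t+1) = b' := by
              rw [h1 (t+1) le_rfl, Function.update_self]
            refine ⟨fun i hi => ?_, fun j hj => ?_⟩
            · rw [h1 i (by omega), Function.update_of_ne (by omega)]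
            · rcases j with _ | j'
              · simpa [hωt1] using hg
              · have := h2 j' (by simpa using Nat.lt_of_succ_lt_succ hj)
                have harith : t+1+(j'+1) = t+1+1+j' := by omega
                rw [harith]
                simpa using this
          · simp [hS, hg] at hb'
      have hdisj : Pairwise (Function.onFun Disjoint S) := by
        intro b1 b2 hne
        rw [Function.onFun, Set.disjoint_left]
        intro ω hω1 hω2
        by_cases hg1 : g b1 = c
        · by_cases hg2 : g b2 = c
          · simp only [hS, hg1, hg2, if_true, Set.mem_setOf_eq] at hω1 hω2
            have e1 : ω (t+1) = b1 := by rw [hω1.1 (t+1) le_rfl, Function.update_self]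
            have e2 : ω (t+1) = b2 := by rw [hω2.1 (t+1) le_rfl, Function.update_self]
            exact hne (e1 ▸ e2)
          · simp [hS, hg2] at hω2
        · simp [hS, hg1] at hω1
      have hmeas : ∀ b', MeasurableSet (S b') := by
        intro b'
        by_cases hg : g b' = c
        · simpa [hS, hg] using measSet_E g (t+1) (Function.update a (t+1) b') cs d0
        · simp [hS, hg]
      rw [hE, measure_iUnion hdisj hmeas]
      have hterm : ∀ b', μY (S b') = if g b' = c then
          ((αY (a 0) * ∏ i ∈ Finset.range t, PY (a i) (a (i+1))) * PY (a t) b') * vpath PY g b' cs else 0 := by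
        intro b'
        by_cases hg : g b' = c
        · simp only [hS, hg, if_true]
          rw [ih (t+1) (Function.update a (t+1) b')]
          have h0 : Function.update a (t+1) b' 0 = a 0 := Function.update_of_ne (by omega) _ _
          have hprod : (∏ i ∈ Finset.range (t+1),
                PY (Function.update a (t+1) b' i) (Function.update a (t+1) b' (i+1)))
              = (∏ i ∈ Finset.range t, PY (a i) (a (i+1))) * PY (a t) b' := by
            rw [Finset.prod_range_succ]
            congr 1
            · refine Finset.prod_congr rfl fun i hi => ?_
              have hi' := Finset.mem_range.1 hi
              rw [Function.update_of_ne (by omega), Function.update_of_ne (by omega)]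
            · rw [Function.update_of_ne (by omega), Function.update_self]
          rw [h0, hprod, Function.update_self]
          ring
        · simp [hS, hg]
      rw [tsum_congr hterm, vpath_cons, ← ENNReal.tsum_mul_left]
      refine tsum_congr fun b' => ?_
      by_cases hg : g b' = c
      · simp only [hg, if_true]; ring
      · simp [hg]


lemma Qw_eq_prod (PZ : C → C → ℝ≥0∞) (d0 : C) :
    ∀ (w : List C) (z : ℕ → C) (s : ℕ), (∀ j, j < w.length → z (s+1+j) = w.getD j d0) →
      (∏ j ∈ Finset.range w.length, PZ (z (s+j)) (z (s+j+1))) = Qw PZ (z s) w := by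
  intro w
  induction w with
  | nil => intro z s _; simp [Qw]
  | cons c cs ih =>
      intro z s hm
      have h0 : z (s+1) = c := by simpa using hm 0 (by simp)
      have hlen : (c :: cs).length = cs.length + 1 := rfl
      rw [hlen, Finset.prod_range_succ']
      have hfac : PZ (z (s+0)) (z (s+0+1)) = PZ (z s) c := by rw [Nat.add_zero, h0]
      have hrest : (∏ j ∈ Finset.range cs.length, PZ (z (s+(j+1))) (z (s+(j+1)+1)))
          = Qw PZ (z (s+1)) cs := by
        have hcg : ∀ j ∈ Finset.range cs.length, PZ (z (s+(j+1))) (z (s+(j+1)+1))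
            = PZ (z ((s+1)+j)) (z ((s+1)+j+1)) := by
          intro j _
          have e1 : s+(j+1) = (s+1)+j := by omega
          rw [e1]
        rw [Finset.prod_congr rfl hcg]
        refine ih z (s+1) fun j hj => ?_
        have hh := hm (j+1) (by simpa using Nat.succ_lt_succ hj)
        have e2 : s+1+(j+1) = (s+1)+1+j := by omega
        rw [e2] at hh
        simpa using hh
      rw [hfac, hrest, h0, Qw, mul_comm]

theorem kappa_exists
    [Countable C]
    (αY : B → ℝ≥0∞) (PY : B → B → ℝ≥0∞) (μY : Measure (ℕ → B))
    (αZ : C → ℝ≥0∞) (PZ : C → C → ℝ≥0∞) (μZ : Measure (ℕ → C))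
    (g : B → C) (hY : IsMarkovChain αY PY μY) (hZ : IsMarkovChain αZ PZ μZ)
    (hgY : μY.map (fun ω n => g (ω n)) = μZ)
    (b : B) (hb : ∃ t : ℕ, μY {ω | ω t = b} ≠ 0) :
    ∃ κ : ℝ≥0∞, κ ≠ ⊤ ∧ ∀ w : List C, vpath PY g b w ≤ κ * Qw PZ (g b) w := by
  obtain ⟨t, hvis⟩ := hb
  obtain ⟨a, hat, hcyl⟩ := exists_hist μY t b hvis
  haveI : IsProbabilityMeasure μY := hY.1
  haveI : IsProbabilityMeasure μZ := hZ.1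
  set p : ℝ≥0∞ := αY (a 0) * ∏ i ∈ Finset.range t, PY (a i) (a (i+1)) with hp
  have hpcyl : μY {ω | ∀ i ≤ t, ω i = a i} = p := hY.2.2.2 t a
  have hp0 : p ≠ 0 := by rw [← hpcyl]; exact hcyl
  have hptop : p ≠ ⊤ := by
    rw [← hpcyl]; exact (lt_of_le_of_lt prob_le_one ENNReal.one_lt_top).ne
  set N : ℝ≥0∞ := αZ (g (a 0)) * ∏ i ∈ Finset.range t, PZ (g (a i)) (g (a (i+1))) with hN
  have hNtop : N ≠ ⊤ := by
    have hh := hZ.2.2.2 t (fun i => g (a i))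
    rw [hN, ← hh]
    exact (lt_of_le_of_lt prob_le_one ENNReal.one_lt_top).ne
  have key : ∀ w : List C, p * vpath PY g b w ≤ N * Qw PZ (g b) w := by
    intro w
    set L := w.length with hL
    set zw : ℕ → C := fun i => if i ≤ t then g (a i) else w.getD (i - (t+1)) (g b) with hzw
    have hE : {ω : ℕ → B | (∀ i ≤ t, ω i = a i) ∧ ∀ j, j < L → g (ω (t+1+j)) = w.getD j (g b)}
        ⊆ (fun (ω : ℕ → B) (n : ℕ) => g (ω n)) ⁻¹' {ζ : ℕ → C | ∀ i ≤ t + L, ζ i = zw i} := by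
      rintro ω ⟨h1, h2⟩
      intro i hi
      simp only [hzw]
      by_cases hit : i ≤ t
      · simp only [if_pos hit]
        rw [h1 i hit]
      · simp only [if_neg hit]
        have hj : i - (t+1) < L := by omega
        have hh := h2 (i - (t+1)) hj
        have e : t+1+(i-(t+1)) = i := by omega
        rw [e] at hh
        exact hh
    have hμE : μY {ω : ℕ → B | (∀ i ≤ t, ω i = a i) ∧ ∀ j, j < L → g (ω (t+1+j)) = w.getD j (g b)}
        = p * vpath PY g b w := by
      rw [muE hY (g b) w t a, hat]
    have hμpre : μY ((fun (ω : ℕ → B) (n : ℕ) => g (ω n)) ⁻¹' {ζ : ℕ → C | ∀ i ≤ t + L, ζ i = zw i})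
        = μZ {ζ : ℕ → C | ∀ i ≤ t + L, ζ i = zw i} := by
      rw [← hgY, Measure.map_apply (map_g_measurable g) (measSet_cyl (t+L) zw)]
    have hμZ : μZ {ζ : ℕ → C | ∀ i ≤ t + L, ζ i = zw i} = N * Qw PZ (g b) w := by
      rw [hZ.2.2.2 (t+L) zw]
      have hz0 : zw 0 = g (a 0) := by simp [hzw]
      have hsplit : (∏ i ∈ Finset.range (t+L), PZ (zw i) (zw (i+1)))
          = (∏ i ∈ Finset.range t, PZ (zw i) (zw (i+1))) * ∏ j ∈ Finset.range L, PZ (zw (t+j)) (zw (t+j+1)) := by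
        rw [Finset.prod_range_add]
      have hfirst : (∏ i ∈ Finset.range t, PZ (zw i) (zw (i+1)))
          = ∏ i ∈ Finset.range t, PZ (g (a i)) (g (a (i+1))) := by
        refine Finset.prod_congr rfl fun i hi => ?_
        have hi' := Finset.mem_range.1 hi
        have e1 : zw i = g (a i) := by
          have : i ≤ t := by omega
          simp [hzw, this]
        have e2 : zw (i+1) = g (a (i+1)) := by
          have : i+1 ≤ t := by omega
          simp [hzw, this]
        rw [e1, e2]
      have hsecond : (∏ j ∈ Finset.range L, PZ (zw (t+j)) (zw (t+j+1))) = Qw PZ (g b) w := by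
        have hmatch : ∀ j, j < w.length → zw (t+1+j) = w.getD j (g b) := by
          intro j hj
          have h1 : ¬ (t+1+j ≤ t) := by omega
          have h2 : t+1+j - (t+1) = j := by omega
          simp [hzw, h1, h2]
        have hzwt : zw t = g (a t) := by simp [hzw]
        have hql := Qw_eq_prod PZ (g b) w zw t hmatch
        rw [hzwt, hat] at hql
        exact hql
      rw [hz0, hsplit, hfirst, hsecond, hN]
      ring
    calc p * vpath PY g b w
        = μY {ω : ℕ → B | (∀ i ≤ t, ω i = a i) ∧ ∀ j, j < L → g (ω (t+1+j)) = w.getD j (g b)} := hμE.symm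
      _ ≤ μY ((fun (ω : ℕ → B) (n : ℕ) => g (ω n)) ⁻¹' {ζ : ℕ → C | ∀ i ≤ t + L, ζ i = zw i}) :=
          measure_mono hE
      _ = N * Qw PZ (g b) w := by rw [hμpre, hμZ]
  refine ⟨N / p, ?_, fun w => ?_⟩
  · exact (ENNReal.div_lt_top hNtop hp0).ne
  · have h1 : vpath PY g b w = p⁻¹ * (p * vpath PY g b w) := by
      rw [← mul_assoc, ENNReal.inv_mul_cancel hp0 hptop, one_mul]
    rw [h1]
    calc p⁻¹ * (p * vpath PY g b w) ≤ p⁻¹ * (N * Qw PZ (g b) w) :=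
          mul_le_mul_right (key w) _
      _ = N / p * Qw PZ (g b) w := by rw [ENNReal.div_eq_inv_mul]; ring

end Meas

section Bridge

variable (PX : A → A → ℝ≥0∞) (PY : B → B → ℝ≥0∞) (PZ : C → C → ℝ≥0∞)
variable (f : A → C) (g : B → C)

lemma tsum_delta (F : Delta f g → ℝ≥0∞) :
    (∑' e : Delta f g, F e) = ∑' p : A × B, (if h : f p.1 = g p.2 then F ⟨p, h⟩ else 0) := by
  classical
  rw [← Function.Injective.tsum_eq (g := (Subtype.val : Delta f g → A × B))
      (f := fun p : A × B => if h : f p.1 = g p.2 then F ⟨p, h⟩ else 0)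
      Subtype.val_injective ?_]
  · exact tsum_congr fun e => by rw [dif_pos e.2]
  · intro p hp
    simp only [Function.mem_support] at hp
    by_cases h : f p.1 = g p.2
    · exact ⟨⟨p, h⟩, rfl⟩
    · simp [h] at hp

noncomputable def xf : ℕ → A → B → ℝ≥0∞ := fun m a b =>
  if h : f a = g b then phim (Rmat PX PY PZ f g) m ⟨(a, b), h⟩ else 0

lemma xf_rec (m : ℕ) (a : A) (b : B) (h : f a = g b) :
    xf PX PY PZ f g (m+1) a b
      = ∑' a', ∑' b', (if (f a' = g b' ∧ PZ (f a) (f a') ≠ 0)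
          then PX a a' * PY b b' / PZ (f a) (f a') * xf PX PY PZ f g m a' b' else 0) := by
  have h0 : xf PX PY PZ f g (m+1) a b
      = ∑' e : Delta f g, Rmat PX PY PZ f g ⟨(a, b), h⟩ e * phim (Rmat PX PY PZ f g) m e := by
    rw [xf, dif_pos h]; rfl
  rw [h0, tsum_delta]
  have h2 : (∑' p : A × B, (if h' : f p.1 = g p.2 then
        Rmat PX PY PZ f g ⟨(a, b), h⟩ ⟨p, h'⟩ * phim (Rmat PX PY PZ f g) m ⟨p, h'⟩ else 0))
      = ∑' a', ∑' b', (if h' : f a' = g b' then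
        Rmat PX PY PZ f g ⟨(a, b), h⟩ ⟨(a', b'), h'⟩ * phim (Rmat PX PY PZ f g) m ⟨(a', b'), h'⟩ else 0) := by
    rw [← ENNReal.tsum_prod]
  rw [h2]
  refine tsum_congr fun a' => tsum_congr fun b' => ?_
  by_cases h' : f a' = g b'
  · rw [dif_pos h']
    by_cases hz : PZ (f a) (f a') ≠ 0
    · rw [if_pos ⟨h', hz⟩]
      show Rmat PX PY PZ f g ⟨(a, b), h⟩ ⟨(a', b'), h'⟩ * phim (Rmat PX PY PZ f g) m ⟨(a', b'), h'⟩ = _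
      rw [Rmat, if_pos hz, xf, dif_pos h']
    · rw [if_neg (by tauto), Rmat]
      rw [if_neg hz, zero_mul]
  · rw [dif_neg h', if_neg (by tauto)]

end Bridge

end S12


/-- **`P` is stochastic.** The limit vector `φ` is a non-negative right eigenvector of `R` with
eigenvalue `1` on `Δ'`; equivalently the matrix
`P((a,b),(a',b')) = R((a,b),(a',b')) * φ(a',b') / φ(a,b)` on `Δ'` is row-stochastic:
`Σ_{(a',b') ∈ Δ'} P((a,b),(a',b')) = 1` for every `(a,b) ∈ Δ'`. -/
theorem statement_12
    {A B C : Type*} [Countable A] [Countable B] [Countable C]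
    [MeasurableSpace A] [MeasurableSingletonClass A]
    [MeasurableSpace B] [MeasurableSingletonClass B]
    [MeasurableSpace C] [MeasurableSingletonClass C]
    (αX : A → ℝ≥0∞) (PX : A → A → ℝ≥0∞) (μX : Measure (ℕ → A))
    (αY : B → ℝ≥0∞) (PY : B → B → ℝ≥0∞) (μY : Measure (ℕ → B))
    (αZ : C → ℝ≥0∞) (PZ : C → C → ℝ≥0∞) (μZ : Measure (ℕ → C))
    (f : A → C) (g : B → C)
    (hX : IsMarkovChain αX PX μX) (hY : IsMarkovChain αY PY μY)
    (hZ : IsMarkovChain αZ PZ μZ)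
    (hfX : μX.map (fun ω n => f (ω n)) = μZ)
    (hgY : μY.map (fun ω n => g (ω n)) = μZ)
    (hAvis : ∀ a : A, ∃ t : ℕ, μX {ω | ω t = a} ≠ 0)
    (hBvis : ∀ b : B, ∃ t : ℕ, μY {ω | ω t = b} ≠ 0)
    (φ : Delta f g → ℝ≥0∞)
    (hφ : ∀ d : Delta f g,
      Tendsto (fun m => phim (Rmat PX PY PZ f g) m d) atTop (𝓝 (φ d)))
    (hφfin : ∀ d : Delta f g, φ d ≠ ⊤) :
    (∀ d : Delta f g, φ d ≠ 0 →
      ∑' e : Delta f g, Rmat PX PY PZ f g d e * φ e = φ d) ∧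
    (∀ d : Delta f g, φ d ≠ 0 →
      ∑' e : {e : Delta f g // φ e ≠ 0},
        Rmat PX PY PZ f g d e.1 * φ e.1 / φ d = 1) := by
  classical
  set R := Rmat PX PY PZ f g with hR
  have hPXfin : ∀ u v, PX u v ≠ ⊤ := fun u v =>
    (lt_of_le_of_lt ((ENNReal.le_tsum v).trans (hX.2.2.1 u).le) ENNReal.one_lt_top).ne
  have hPYfin : ∀ u v, PY u v ≠ ⊤ := fun u v =>
    (lt_of_le_of_lt ((ENNReal.le_tsum v).trans (hY.2.2.1 u).le) ENNReal.one_lt_top).ne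
  have hPZtop : ∀ c c', PZ c c' ≠ ⊤ := fun c c' =>
    (lt_of_le_of_lt ((ENNReal.le_tsum c').trans (hZ.2.2.1 c).le) ENNReal.one_lt_top).ne
  have hRtop : ∀ d e : Delta f g, R d e ≠ ⊤ := by
    intro d e
    rw [hR, Rmat]
    split
    · rename_i hz
      exact (ENNReal.div_lt_top (ENNReal.mul_ne_top (hPXfin _ _) (hPYfin _ _)) hz).ne
    · exact ENNReal.zero_ne_top
  choose κY hκYtop hκY using fun b : B =>
    S12.kappa_exists αY PY μY αZ PZ μZ g hY hZ hgY b (hBvis b)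
  choose κX hκXtop hκX using fun a : A =>
    S12.kappa_exists αX PX μX αZ PZ μZ f hX hZ hfX a (hAvis a)
  set x : ℕ → A → B → ℝ≥0∞ := S12.xf PX PY PZ f g with hxdef
  have hrec : ∀ m a b, f a = g b → x (m+1) a b =
      ∑' a', ∑' b', (if (f a' = g b' ∧ PZ (f a) (f a') ≠ 0)
        then PX a a' * PY b b' / PZ (f a) (f a') * x m a' b' else 0) :=
    fun m a b h => S12.xf_rec PX PY PZ f g m a b h
  have hx0 : ∀ a b, x 0 a b ≤ 1 := by
    intro a b
    rw [hxdef]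
    unfold S12.xf
    split <;> simp [phim]
  have IB1 : ∀ (m : ℕ) (b : B) (a' : A),
      (∑' b', if f a' = g b' then PY b b' * x m a' b' else 0) ≤ κY b * PZ (g b) (f a') :=
    S12.IB_lemma hrec hx0 (fun a => (hX.2.2.1 a).le) hPZtop hκY
  set x' : ℕ → B → A → ℝ≥0∞ := fun m b a => x m a b with hx'def
  have hrec' : ∀ m b a, g b = f a → x' (m+1) b a =
      ∑' b', ∑' a', (if (g b' = f a' ∧ PZ (g b) (g b') ≠ 0)
        then PY b b' * PX a a' / PZ (g b) (g b') * x' m b' a' else 0) := by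
    intro m b a h
    have h0 : x' (m+1) b a = x (m+1) a b := rfl
    rw [h0, hrec m a b h.symm, ENNReal.tsum_comm]
    refine tsum_congr fun b' => tsum_congr fun a' => ?_
    by_cases h' : f a' = g b'
    · have e1 : PZ (g b) (g b') = PZ (f a) (f a') := by rw [← h, ← h']
      by_cases hz : PZ (f a) (f a') ≠ 0
      · rw [if_pos ⟨h', hz⟩, if_pos ⟨h'.symm, by rw [e1]; exact hz⟩, e1]
        have e2 : x' m b' a' = x m a' b' := rfl
        rw [e2, div_eq_mul_inv, div_eq_mul_inv]
        ring
      · push_neg at hz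
        rw [if_neg (by tauto), if_neg (by rw [e1]; tauto)]
    · rw [if_neg (by tauto), if_neg (by tauto)]
  have IB2 : ∀ (m : ℕ) (a : A) (b' : B),
      (∑' a', if g b' = f a' then PX a a' * x' m b' a' else 0) ≤ κX a * PZ (f a) (g b') :=
    S12.IB_lemma hrec' (fun b a => hx0 a b) (fun b => (hY.2.2.1 b).le) hPZtop hκX
  -- Part 1 for every d
  have part1 : ∀ d : Delta f g, (∑' e : Delta f g, R d e * φ e) = φ d := by
    rintro ⟨⟨a, b⟩, hab⟩
    set dd : Delta f g := ⟨(a, b), hab⟩ with hdd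
    have htendS : Tendsto (fun m => ∑' e : Delta f g, R dd e * phim R m e) atTop (𝓝 (φ dd)) :=
      (hφ dd).comp (tendsto_add_atTop_nat 1)
    set T : ℕ → A × B → ℝ≥0∞ :=
      fun m p => if h : f p.1 = g p.2 then R dd ⟨p, h⟩ * phim R m ⟨p, h⟩ else 0 with hT
    have hTfac : ∀ m a' b', T m (a', b')
        = (if PZ (f a) (f a') ≠ 0 then PX a a' / PZ (f a) (f a') else 0)
          * (if f a' = g b' then PY b b' * x m a' b' else 0) := by
      intro m a' b'
      simp only [hT]
      by_cases h' : f a' = g b'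
      · rw [dif_pos h', if_pos h']
        have hxe : phim R m ⟨(a', b'), h'⟩ = x m a' b' := by
          rw [hxdef]
          unfold S12.xf
          rw [dif_pos h']
        by_cases hz : PZ (f a) (f a') ≠ 0
        · rw [if_pos hz, hxe, hR, Rmat, if_pos hz, div_eq_mul_inv, div_eq_mul_inv]
          ring
        · rw [if_neg hz, zero_mul, hR, Rmat, if_neg hz, zero_mul]
      · rw [dif_neg h', if_neg h', mul_zero]
    have hinner1 : ∀ m a', (∑' b', T m (a', b')) ≤ PX a a' * κY b := by
      intro m a'
      calc (∑' b', T m (a', b'))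
          = (if PZ (f a) (f a') ≠ 0 then PX a a' / PZ (f a) (f a') else 0)
            * ∑' b', (if f a' = g b' then PY b b' * x m a' b' else 0) := by
            rw [← ENNReal.tsum_mul_left]
            exact tsum_congr fun b' => hTfac m a' b'
        _ ≤ (if PZ (f a) (f a') ≠ 0 then PX a a' / PZ (f a) (f a') else 0)
            * (κY b * PZ (g b) (f a')) := mul_le_mul_right (IB1 m b a') _
        _ ≤ PX a a' * κY b := by
            by_cases hz : PZ (f a) (f a') ≠ 0
            · rw [if_pos hz, ← hab]
              refine le_of_eq ?_
              calc PX a a' / PZ (f a) (f a') * (κY b * PZ (f a) (f a'))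
                  = (PX a a' / PZ (f a) (f a') * PZ (f a) (f a')) * κY b := by ring
                _ = PX a a' * κY b := by rw [ENNReal.div_mul_cancel hz (hPZtop _ _)]
            · rw [if_neg hz, zero_mul]
              exact zero_le
    have hTfac2 : ∀ m a' b', T m (a', b')
        = (if PZ (f a) (g b') ≠ 0 then PY b b' / PZ (f a) (g b') else 0)
          * (if g b' = f a' then PX a a' * x' m b' a' else 0) := by
      intro m a' b'
      by_cases h' : f a' = g b'
      · have e1 : PZ (f a) (g b') = PZ (f a) (f a') := by rw [h']
        rw [hTfac m a' b', if_pos h', if_pos h'.symm, e1]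
        by_cases hz : PZ (f a) (f a') ≠ 0
        · rw [if_pos hz, if_pos hz]
          have e2 : x' m b' a' = x m a' b' := rfl
          rw [e2, div_eq_mul_inv, div_eq_mul_inv]
          ring
        · rw [if_neg hz, if_neg hz, zero_mul, zero_mul]
      · have hgg : ¬ (g b' = f a') := fun hc => h' hc.symm
        rw [hTfac m a' b', if_neg h', mul_zero, if_neg hgg, mul_zero]
    have hinner2 : ∀ m b', (∑' a', T m (a', b')) ≤ PY b b' * κX a := by
      intro m b'
      calc (∑' a', T m (a', b'))
          = (if PZ (f a) (g b') ≠ 0 then PY b b' / PZ (f a) (g b') else 0)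
            * ∑' a', (if g b' = f a' then PX a a' * x' m b' a' else 0) := by
            rw [← ENNReal.tsum_mul_left]
            exact tsum_congr fun a' => hTfac2 m a' b'
        _ ≤ (if PZ (f a) (g b') ≠ 0 then PY b b' / PZ (f a) (g b') else 0)
            * (κX a * PZ (f a) (g b')) := mul_le_mul_right (IB2 m a b') _
        _ ≤ PY b b' * κX a := by
            by_cases hz : PZ (f a) (g b') ≠ 0
            · rw [if_pos hz]
              refine le_of_eq ?_
              calc PY b b' / PZ (f a) (g b') * (κX a * PZ (f a) (g b'))
                  = (PY b b' / PZ (f a) (g b') * PZ (f a) (g b')) * κX a := by ring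
                _ = PY b b' * κX a := by rw [ENNReal.div_mul_cancel hz (hPZtop _ _)]
            · rw [if_neg hz, zero_mul]
              exact zero_le
    have hlow : (∑' e : Delta f g, R dd e * φ e) ≤ φ dd := by
      rw [ENNReal.tsum_eq_iSup_sum]
      refine iSup_le fun s => ?_
      have hfin : Tendsto (fun m => ∑ e ∈ s, R dd e * phim R m e) atTop
          (𝓝 (∑ e ∈ s, R dd e * φ e)) :=
        tendsto_finset_sum s fun e _ => ENNReal.Tendsto.const_mul (hφ e) (Or.inr (hRtop dd e))
      exact le_of_tendsto_of_tendsto' hfin htendS fun m => ENNReal.sum_le_tsum s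
    have hup : φ dd ≤ ∑' e : Delta f g, R dd e * φ e := by
      refine ENNReal.le_of_forall_pos_le_add fun ε hε _ => ?_
      have hc0 : (ε : ℝ≥0∞) ≠ 0 := ENNReal.coe_ne_zero.mpr hε.ne'
      have hε2 : ((ε : ℝ≥0∞) / 2) ≠ 0 := by
        simp only [ne_eq, ENNReal.div_eq_zero_iff, not_or]
        exact ⟨hc0, ENNReal.ofNat_ne_top⟩
      have hδX : ((ε : ℝ≥0∞) / 2 / κY b) ≠ 0 := by
        simp only [ne_eq, ENNReal.div_eq_zero_iff, not_or]
        exact ⟨⟨hc0, ENNReal.ofNat_ne_top⟩, hκYtop b⟩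
      have hδY : ((ε : ℝ≥0∞) / 2 / κX a) ≠ 0 := by
        simp only [ne_eq, ENNReal.div_eq_zero_iff, not_or]
        exact ⟨⟨hc0, ENNReal.ofNat_ne_top⟩, hκXtop a⟩
      obtain ⟨FA, hFA⟩ := S12.exists_tail (fun a' => PX a a')
        (by rw [hX.2.2.1 a]; exact ENNReal.one_ne_top) hδX
      obtain ⟨FB, hFB⟩ := S12.exists_tail (fun b' => PY b b')
        (by rw [hY.2.2.1 b]; exact ENNReal.one_ne_top) hδY
      set G : Finset (Delta f g) := (FA ×ˢ FB).subtype (fun p => f p.1 = g p.2) with hG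
      have e0A : ∀ (m : ℕ),
          (∑' e : Delta f g, if e.1.1 ∉ FA then R dd e * phim R m e else 0)
            = ∑' a', ∑' b', (if a' ∉ FA then T m (a', b') else 0) := by
        intro m
        rw [S12.tsum_delta f g (fun e => if e.1.1 ∉ FA then R dd e * phim R m e else 0),
          ← ENNReal.tsum_prod (f := fun a' b' => if a' ∉ FA then T m (a', b') else 0)]
        refine tsum_congr fun p => ?_
        obtain ⟨pa, pb⟩ := p
        by_cases h' : f pa = g pb
        · by_cases hc : pa ∈ FA <;> simp [hT, h', hc]
        · by_cases hc : pa ∈ FA <;> simp [hT, h', hc]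
      have e0B : ∀ (m : ℕ),
          (∑' e : Delta f g, if e.1.2 ∉ FB then R dd e * phim R m e else 0)
            = ∑' a', ∑' b', (if b' ∉ FB then T m (a', b') else 0) := by
        intro m
        rw [S12.tsum_delta f g (fun e => if e.1.2 ∉ FB then R dd e * phim R m e else 0),
          ← ENNReal.tsum_prod (f := fun a' b' => if b' ∉ FB then T m (a', b') else 0)]
        refine tsum_congr fun p => ?_
        obtain ⟨pa, pb⟩ := p
        by_cases h' : f pa = g pb
        · by_cases hc : pb ∈ FB <;> simp [hT, h', hc]
        · by_cases hc : pb ∈ FB <;> simp [hT, h', hc]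
      have htail1 : ∀ m,
          (∑' e : Delta f g, if e.1.1 ∉ FA then R dd e * phim R m e else 0) ≤ (ε : ℝ≥0∞) / 2 := by
        intro m
        rw [e0A m]
        calc (∑' a', ∑' b', (if a' ∉ FA then T m (a', b') else 0))
            = ∑' a', (if a' ∉ FA then ∑' b', T m (a', b') else 0) := by
              refine tsum_congr fun a' => ?_
              by_cases hFa : a' ∈ FA <;> simp [hFa]
          _ ≤ ∑' a', (if a' ∉ FA then PX a a' * κY b else 0) := by
              refine ENNReal.tsum_le_tsum fun a' => ?_
              by_cases hFa : a' ∈ FA <;> simp [hFa, hinner1 m a']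
          _ = κY b * ∑' a', (if a' ∉ FA then PX a a' else 0) := by
              rw [← ENNReal.tsum_mul_left]
              refine tsum_congr fun a' => ?_
              by_cases hFa : a' ∈ FA <;> simp [hFa, mul_comm]
          _ ≤ κY b * ((ε : ℝ≥0∞) / 2 / κY b) := mul_le_mul_right hFA _
          _ ≤ (ε : ℝ≥0∞) / 2 := ENNReal.mul_div_le
      have htail2 : ∀ m,
          (∑' e : Delta f g, if e.1.2 ∉ FB then R dd e * phim R m e else 0) ≤ (ε : ℝ≥0∞) / 2 := by
        intro m
        rw [e0B m, ENNReal.tsum_comm]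
        calc (∑' b', ∑' a', (if b' ∉ FB then T m (a', b') else 0))
            = ∑' b', (if b' ∉ FB then ∑' a', T m (a', b') else 0) := by
              refine tsum_congr fun b' => ?_
              by_cases hFb : b' ∈ FB <;> simp [hFb]
          _ ≤ ∑' b', (if b' ∉ FB then PY b b' * κX a else 0) := by
              refine ENNReal.tsum_le_tsum fun b' => ?_
              by_cases hFb : b' ∈ FB <;> simp [hFb, hinner2 m b']
          _ = κX a * ∑' b', (if b' ∉ FB then PY b b' else 0) := by
              rw [← ENNReal.tsum_mul_left]
              refine tsum_congr fun b' => ?_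
              by_cases hFb : b' ∈ FB <;> simp [hFb, mul_comm]
          _ ≤ κX a * ((ε : ℝ≥0∞) / 2 / κX a) := mul_le_mul_right hFB _
          _ ≤ (ε : ℝ≥0∞) / 2 := ENNReal.mul_div_le
      have hsplitm : ∀ m, (∑' e : Delta f g, R dd e * phim R m e)
          ≤ (∑ e ∈ G, R dd e * phim R m e) + ((ε : ℝ≥0∞) / 2 + (ε : ℝ≥0∞) / 2) := by
        intro m
        have hdecomp : (∑' e : Delta f g, R dd e * phim R m e)
            = (∑ e ∈ G, R dd e * phim R m e)
              + ∑' e : ↑((↑G : Set (Delta f g))ᶜ), R dd ↑e * phim R m ↑e := by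
          rw [← Summable.tsum_add_tsum_compl (s := (↑G : Set (Delta f g))) ENNReal.summable ENNReal.summable,
            Finset.tsum_subtype' G (fun e => R dd e * phim R m e)]
        rw [hdecomp]
        refine add_le_add le_rfl ?_
        have hcompl : (∑' e : ↑((↑G : Set (Delta f g))ᶜ), R dd ↑e * phim R m ↑e)
            ≤ (∑' e : Delta f g, if e.1.1 ∉ FA then R dd e * phim R m e else 0)
              + (∑' e : Delta f g, if e.1.2 ∉ FB then R dd e * phim R m e else 0) := by
          rw [tsum_subtype ((↑G : Set (Delta f g))ᶜ) (fun e => R dd e * phim R m e),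
            ← ENNReal.tsum_add]
          refine ENNReal.tsum_le_tsum fun e => ?_
          by_cases he : e ∈ ((↑G : Set (Delta f g))ᶜ)
          · rw [Set.indicator_of_mem he]
            have hnot : e.1.1 ∉ FA ∨ e.1.2 ∉ FB := by
              have hmem : ¬ (e.1 ∈ FA ×ˢ FB) := by
                intro hmem
                exact he (Finset.mem_coe.2 (Finset.mem_subtype.2 hmem))
              rw [Finset.mem_product] at hmem
              tauto
            rcases hnot with hn | hn
            · rw [if_pos hn]
              exact le_add_right le_rfl
            · rw [if_pos hn]
              exact le_add_left le_rfl
          · rw [Set.indicator_of_notMem he]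
            exact zero_le
        exact le_trans hcompl (add_le_add (htail1 m) (htail2 m))
      have hfint : Tendsto
          (fun m => (∑ e ∈ G, R dd e * phim R m e) + ((ε : ℝ≥0∞) / 2 + (ε : ℝ≥0∞) / 2)) atTop
          (𝓝 ((∑ e ∈ G, R dd e * φ e) + ((ε : ℝ≥0∞) / 2 + (ε : ℝ≥0∞) / 2))) :=
        (tendsto_finset_sum G fun e _ =>
          ENNReal.Tendsto.const_mul (hφ e) (Or.inr (hRtop dd e))).add tendsto_const_nhds
      have hle := le_of_tendsto_of_tendsto' htendS hfint hsplitm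
      calc φ dd ≤ (∑ e ∈ G, R dd e * φ e) + ((ε : ℝ≥0∞) / 2 + (ε : ℝ≥0∞) / 2) := hle
        _ ≤ (∑' e : Delta f g, R dd e * φ e) + (ε : ℝ≥0∞) := by
            rw [ENNReal.add_halves]
            exact add_le_add (ENNReal.sum_le_tsum G) le_rfl
    exact le_antisymm hlow hup
  refine ⟨fun d _ => part1 d, fun d hd0 => ?_⟩
  have h1 : (∑' e : {e : Delta f g // φ e ≠ 0}, R d e.1 * φ e.1 / φ d)
      = (∑' e : {e : Delta f g // φ e ≠ 0}, R d e.1 * φ e.1) / φ d := by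
    simp only [div_eq_mul_inv]
    exact ENNReal.tsum_mul_right
  rw [h1]
  have h2 : (∑' e : {e : Delta f g // φ e ≠ 0}, R d e.1 * φ e.1)
      = ∑' e : Delta f g, R d e * φ e := by
    refine Function.Injective.tsum_eq
      (g := (Subtype.val : {e : Delta f g // φ e ≠ 0} → Delta f g))
      (f := fun e => R d e * φ e) Subtype.val_injective ?_
    intro e he
    simp only [Function.mem_support] at he
    exact ⟨⟨e, fun h0 => he (by rw [h0, mul_zero])⟩, rfl⟩
  rw [h2, part1 d]
  exact ENNReal.div_self hd0 (hφfin d)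
end
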